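/- arXiv:2101.12652 — 3 statements merged into one kernel-verified Lean document; each statement's English description precedes it below -/
import Mathlib

section
/- Let N ≥ 2, k ∈ ℕ with k ≥ 1, and 0 < t₁ < … < t_k. Define v(t,s) = Re( −∏_{ℓ=1}^k ((t + is) − t_ℓ)((t + is) + t_ℓ) ) for t,s ∈ ℝ, and u_ε(x,y) = (1/2)(N − |y|²) + ε Σ_{j=1}^N v(x, y_j) for x ∈ ℝ, y = (y₁,…,y_N) ∈ ℝ^N. Let Ω_ε be the connected component of {(x,y) : u_ε(x,y) > 0} containing the origin. Then for every η ∈ (0,1) there exists ε₀ > 0 such that for all ε ∈ (0,ε₀), Ω_ε ⊆ C_ε := { (x,y) ∈ ℝ^{N+1} : |x| < ε^{−1/(2k)} and |y|² < N(1+η)² }. -/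
open MeasureTheory Set Filter Topology

set_option maxHeartbeats 1000000

noncomputable section

/-- Points of `ℝ^{N+1}` written `(x, y)` with `x ∈ ℝ`, `y ∈ ℝ^N`. -/
abbrev Pt (N : ℕ) := ℝ × (Fin N → ℝ)

/-- `v(t,s) = Re( −∏_ℓ ((t+is) − t_ℓ)((t+is) + t_ℓ) )`. -/
def vfun (k : ℕ) (t : Fin k → ℝ) (a s : ℝ) : ℝ :=
  (-∏ l : Fin k, ((((a : ℂ) + (s : ℂ) * Complex.I) - (t l : ℂ)) *
      (((a : ℂ) + (s : ℂ) * Complex.I) + (t l : ℂ)))).re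

/-- `u_ε(x,y) = (1/2)(N − |y|²) + ε Σ_j v(x, y_j)`. -/
def ueps (N k : ℕ) (t : Fin k → ℝ) (ε : ℝ) (p : Pt N) : ℝ :=
  (1 / 2) * ((N : ℝ) - ∑ j, (p.2 j) ^ 2) + ε * ∑ j, vfun k t p.1 (p.2 j)

/-- `Ω_ε`: the connected component of `{u_ε > 0}` containing the origin. -/
def OmT (N k : ℕ) (t : Fin k → ℝ) (ε : ℝ) : Set (Pt N) :=
  connectedComponentIn {p : Pt N | 0 < ueps N k t ε p} 0

theorem prod_sub_pow_bound' {ι : Type*} (s : Finset ι) (w : ℂ) (c : ι → ℂ) (T : ℝ)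
    (hT : 0 ≤ T) (hc : ∀ i ∈ s, ‖c i‖ ≤ T) :
    ‖(∏ i ∈ s, (w - c i)) - w ^ s.card‖ ≤ (‖w‖ + T) ^ s.card - ‖w‖ ^ s.card := by
  induction s using Finset.cons_induction with
  | empty => simp
  | cons a s ha ih =>
    have hih := ih (fun i hi => hc i (Finset.mem_cons_of_mem hi))
    rw [Finset.prod_cons, Finset.card_cons]
    have key : (w - c a) * ∏ i ∈ s, (w - c i) - w ^ (s.card + 1)
        = (w - c a) * ((∏ i ∈ s, (w - c i)) - w ^ s.card) - c a * w ^ s.card := by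
      ring
    rw [key]
    calc ‖(w - c a) * ((∏ i ∈ s, (w - c i)) - w ^ s.card) - c a * w ^ s.card‖
        ≤ ‖w - c a‖ * ‖(∏ i ∈ s, (w - c i)) - w ^ s.card‖ + ‖c a‖ * ‖w ^ s.card‖ := by
          refine (norm_sub_le _ _).trans ?_
          rw [norm_mul, norm_mul]
      _ ≤ (‖w‖ + T) * ((‖w‖ + T) ^ s.card - ‖w‖ ^ s.card) + T * ‖w‖ ^ s.card := by
          rw [norm_pow]
          have h1 : ‖w - c a‖ ≤ ‖w‖ + T :=
            (norm_sub_le _ _).trans (by gcongr; exact hc a (Finset.mem_cons_self a s))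
          have h2 : ‖c a‖ ≤ T := hc a (Finset.mem_cons_self a s)
          have h3 : (0:ℝ) ≤ ‖w‖ ^ s.card := by positivity
          exact add_le_add (mul_le_mul h1 hih (norm_nonneg _) (by positivity))
            (mul_le_mul_of_nonneg_right h2 h3)
      _ = (‖w‖ + T) ^ (s.card + 1) - ‖w‖ ^ (s.card + 1) := by ring

theorem vfun_le' (k : ℕ) (t : Fin k → ℝ) (B : ℝ) (hB : 1 ≤ B) (htB : ∀ l, |t l| ≤ B)
    (a s : ℝ) (hs : s ^ 2 ≤ B ^ 2) :
    vfun k t a s ≤ -(|a| ^ (2 * k)) + ((|a| + B) ^ (2 * k) - |a| ^ (2 * k))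
      + ((|a| ^ 2 + 2 * B ^ 2) ^ k - |a| ^ (2 * k)) := by
  set z : ℂ := (a : ℂ) + (s : ℂ) * Complex.I with hz
  have hB0 : (0:ℝ) ≤ B := le_trans zero_le_one hB
  have hsB : |s| ≤ B := by nlinarith [sq_abs s, abs_nonneg s]
  have hprod : (∏ l : Fin k, ((z - (t l : ℂ)) * (z + (t l : ℂ))))
      = ∏ l : Fin k, (z ^ 2 - ((t l : ℂ)) ^ 2) :=
    Finset.prod_congr rfl fun l _ => by ring
  set P : ℂ := ∏ l : Fin k, (z ^ 2 - ((t l : ℂ)) ^ 2) with hP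
  have hD1 : ‖P - (z ^ 2) ^ k‖ ≤ (‖z ^ 2‖ + B ^ 2) ^ k - ‖z ^ 2‖ ^ k := by
    have := prod_sub_pow_bound' (Finset.univ : Finset (Fin k)) (z ^ 2)
      (fun l => ((t l : ℂ)) ^ 2) (B ^ 2) (by positivity)
      (fun l _ => by
        rw [norm_pow]
        have he : ‖(t l : ℂ)‖ = |t l| := by rw [Complex.norm_real, Real.norm_eq_abs]
        rw [he]
        exact pow_le_pow_left₀ (abs_nonneg _) (htB l) 2)
    simpa using this
  have hD2 : ‖(z ^ 2) ^ k - (((a:ℂ)) ^ 2) ^ k‖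
      ≤ (‖((a:ℂ)) ^ 2‖ + (B ^ 2 + 2 * B * |a|)) ^ k - ‖((a:ℂ)) ^ 2‖ ^ k := by
    have := prod_sub_pow_bound' (Finset.univ : Finset (Fin k)) (((a:ℂ)) ^ 2)
      (fun _ => ((a:ℂ)) ^ 2 - z ^ 2) (B ^ 2 + 2 * B * |a|) (by positivity)
      (fun l _ => by
        have hfac : ((a:ℂ)) ^ 2 - z ^ 2
            = (-(s:ℂ) * Complex.I) * (2 * (a:ℂ) + (s:ℂ) * Complex.I) := by
          rw [hz]; ring
        rw [hfac, norm_mul]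
        have h1 : ‖-(s:ℂ) * Complex.I‖ = |s| := by
          simp [norm_mul, Complex.norm_real]
        have h2 : ‖2 * (a:ℂ) + (s:ℂ) * Complex.I‖ ≤ 2 * |a| + |s| := by
          refine (norm_add_le _ _).trans ?_
          simp [norm_mul, Complex.norm_real]
        rw [h1]
        calc |s| * ‖2 * (a:ℂ) + (s:ℂ) * Complex.I‖ ≤ B * (2 * |a| + B) :=
              mul_le_mul hsB (h2.trans (by linarith)) (norm_nonneg _) hB0
          _ = B ^ 2 + 2 * B * |a| := by ring)
    simpa [Finset.prod_const, sub_sub_cancel] using this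
  have hvf : vfun k t a s = -P.re := by
    rw [vfun, hprod, Complex.neg_re]
  have hPre : P.re = (((a:ℂ) ^ 2) ^ k).re + (P - (z ^ 2) ^ k).re
      + ((z ^ 2) ^ k - ((a:ℂ) ^ 2) ^ k).re := by
    simp only [Complex.sub_re, Complex.add_re]; ring
  have hare : (((a:ℂ) ^ 2) ^ k).re = |a| ^ (2 * k) := by
    rw [← pow_mul]
    norm_cast
    rw [pow_mul, pow_mul, sq_abs]
  have hre1 : -(P - (z ^ 2) ^ k).re ≤ ‖P - (z ^ 2) ^ k‖ := by
    have h := Complex.abs_re_le_norm (P - (z ^ 2) ^ k)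
    linarith [(abs_le.mp h).1]
  have hre2 : -((z ^ 2) ^ k - ((a:ℂ) ^ 2) ^ k).re ≤ ‖(z ^ 2) ^ k - ((a:ℂ) ^ 2) ^ k‖ := by
    have h := Complex.abs_re_le_norm ((z ^ 2) ^ k - ((a:ℂ) ^ 2) ^ k)
    linarith [(abs_le.mp h).1]
  have hnz : ‖z ^ 2‖ = a ^ 2 + s ^ 2 := by
    rw [norm_pow, Complex.sq_norm, hz, Complex.normSq_add_mul_I]
  have hna : ‖((a:ℂ)) ^ 2‖ = |a| ^ 2 := by
    rw [norm_pow, Complex.norm_real, Real.norm_eq_abs]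
  have ha2 : a ^ 2 = |a| ^ 2 := (sq_abs a).symm
  have hD1' : ‖P - (z ^ 2) ^ k‖ ≤ (|a| ^ 2 + 2 * B ^ 2) ^ k - |a| ^ (2 * k) := by
    refine hD1.trans ?_
    have h1 : (‖z ^ 2‖ + B ^ 2) ^ k ≤ (|a| ^ 2 + 2 * B ^ 2) ^ k := by
      apply pow_le_pow_left₀ (by positivity)
      rw [hnz]; nlinarith
    have h2 : |a| ^ (2 * k) ≤ ‖z ^ 2‖ ^ k := by
      rw [pow_mul, hnz]
      apply pow_le_pow_left₀ (by positivity)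
      nlinarith
    linarith
  have hD2' : ‖(z ^ 2) ^ k - ((a:ℂ) ^ 2) ^ k‖ ≤ (|a| + B) ^ (2 * k) - |a| ^ (2 * k) := by
    refine hD2.trans ?_
    rw [hna]
    have h1 : |a| ^ 2 + (B ^ 2 + 2 * B * |a|) = (|a| + B) ^ 2 := by ring
    rw [h1, ← pow_mul, ← pow_mul]
  rw [hvf, hPre, hare]
  linarith

theorem exists_x0' (k : ℕ) (B : ℝ) (_hB : 1 ≤ B) :
    ∃ x₀ : ℝ, B ≤ x₀ ∧ 1 ≤ x₀ ∧ ∀ x : ℝ, x₀ ≤ x →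
      (x + B) ^ (2 * k) + (x ^ 2 + 2 * B ^ 2) ^ k ≤ 5 / 2 * x ^ (2 * k) := by
  have t1 : Tendsto (fun x : ℝ => 1 + B * x⁻¹) atTop (𝓝 1) := by
    have := tendsto_inv_atTop_zero.const_mul B
    simpa using tendsto_const_nhds.add this
  have t2 : Tendsto (fun x : ℝ => 1 + 2 * B ^ 2 * (x ^ 2)⁻¹) atTop (𝓝 1) := by
    have h2 : Tendsto (fun x : ℝ => (x ^ 2)⁻¹) atTop (𝓝 0) :=
      (tendsto_pow_atTop (two_ne_zero)).inv_tendsto_atTop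
    simpa using tendsto_const_nhds.add (h2.const_mul (2 * B ^ 2))
  have h1 : Tendsto (fun x : ℝ => (1 + B * x⁻¹) ^ (2 * k) + (1 + 2 * B ^ 2 * (x ^ 2)⁻¹) ^ k)
      atTop (𝓝 2) := by
    have h := (t1.pow (2 * k)).add (t2.pow k)
    norm_num at h
    exact h
  have h2 : ∀ᶠ x : ℝ in atTop,
      (1 + B * x⁻¹) ^ (2 * k) + (1 + 2 * B ^ 2 * (x ^ 2)⁻¹) ^ k < 5 / 2 :=
    h1.eventually_lt_const (by norm_num)
  obtain ⟨c, hc⟩ := eventually_atTop.mp h2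
  refine ⟨max c (max 1 B), le_trans (le_max_right 1 B) (le_max_right _ _),
    le_trans (le_max_left 1 B) (le_max_right _ _), fun x hx => ?_⟩
  have hx1 : (1:ℝ) ≤ x := le_trans (le_trans (le_max_left 1 B) (le_max_right _ _)) hx
  have hx0 : (0:ℝ) < x := lt_of_lt_of_le one_pos hx1
  have hcx := hc x (le_trans (le_max_left _ _) hx)
  have e1 : (x + B) ^ (2 * k) = x ^ (2 * k) * (1 + B * x⁻¹) ^ (2 * k) := by
    rw [← mul_pow]; congr 1; field_simp
  have e2 : (x ^ 2 + 2 * B ^ 2) ^ k = (x ^ 2) ^ k * (1 + 2 * B ^ 2 * (x ^ 2)⁻¹) ^ k := by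
    rw [← mul_pow]; congr 1; field_simp
  rw [e1, e2, ← pow_mul]
  nlinarith [pow_nonneg (le_of_lt hx0) (2 * k)]

theorem vfun_cont' (k : ℕ) (t : Fin k → ℝ) :
    Continuous fun p : ℝ × ℝ => vfun k t p.1 p.2 := by
  unfold vfun
  refine Complex.continuous_re.comp (Continuous.neg ?_)
  exact continuous_finset_prod _ fun l _ => by fun_prop

theorem statement11 (N : ℕ) (hN : 2 ≤ N) (k : ℕ) (hk : 1 ≤ k)
    (t : Fin k → ℝ) (ht : StrictMono t) (htpos : ∀ i, 0 < t i) :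
    ∀ η ∈ Ioo (0:ℝ) 1, ∃ ε₀ > (0:ℝ), ∀ ε ∈ Ioo (0:ℝ) ε₀,
      OmT N k t ε ⊆
        {p : Pt N | |p.1| < ε ^ (-(1:ℝ) / (2 * (k:ℝ))) ∧
          ∑ j, (p.2 j) ^ 2 < (N : ℝ) * (1 + η) ^ 2} := by
  intro η hη
  obtain ⟨hη0, hη1⟩ := hη
  have hN0 : (0:ℝ) < N := by
    have : (0:ℕ) < N := by omega
    exact_mod_cast this
  have hkR : (1:ℝ) ≤ (k:ℝ) := by exact_mod_cast hk
  set M : ℝ := (N : ℝ) * (1 + η) ^ 2 with hM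
  have hM0 : 0 < M := by positivity
  have hNM : (N:ℝ) ≤ M := by rw [hM]; nlinarith [mul_pos hN0 hη0, mul_nonneg hN0.le (sq_nonneg η)]
  have hNM' : (1/2) * ((N:ℝ) - M) ≤ -(η * N) := by rw [hM]; nlinarith [mul_pos hN0 hη0, mul_nonneg hN0.le (sq_nonneg η)]
  set B : ℝ := 1 + Real.sqrt M + ∑ l, t l with hB
  have hB1 : 1 ≤ B := by
    have h1 : 0 ≤ Real.sqrt M := Real.sqrt_nonneg _
    have h2 : 0 ≤ ∑ l, t l := Finset.sum_nonneg fun l _ => (htpos l).le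
    simp only [hB]; linarith
  have hB0 : 0 < B := lt_of_lt_of_le one_pos hB1
  have htB : ∀ l, |t l| ≤ B := by
    intro l
    rw [abs_of_pos (htpos l)]
    have h1 : t l ≤ ∑ l, t l :=
      Finset.single_le_sum (fun i _ => (htpos i).le) (Finset.mem_univ l)
    have h2 : 0 ≤ Real.sqrt M := Real.sqrt_nonneg _
    simp only [hB]; linarith
  have hMB : M ≤ B ^ 2 := by
    have h1 : Real.sqrt M ≤ B := by
      have h2 : 0 ≤ ∑ l, t l := Finset.sum_nonneg fun l _ => (htpos l).le
      simp only [hB]; linarith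
    calc M = Real.sqrt M ^ 2 := (Real.sq_sqrt hM0.le).symm
      _ ≤ B ^ 2 := pow_le_pow_left₀ (Real.sqrt_nonneg _) h1 2
  obtain ⟨x₀, hBx₀, hx₀1, hx₀⟩ := exists_x0' k B hB1
  have hx₀0 : (0:ℝ) < x₀ := lt_of_lt_of_le one_pos hx₀1
  -- pointwise negativity for |a| ≥ x₀
  have hvneg : ∀ a s : ℝ, x₀ ≤ |a| → s ^ 2 ≤ B ^ 2 →
      vfun k t a s ≤ -(|a| ^ (2 * k)) / 2 := by
    intro a s ha hs
    have h := vfun_le' k t B hB1 htB a s hs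
    have h5 := hx₀ |a| ha
    linarith
  -- compact bound
  obtain ⟨C, hC⟩ := ((isCompact_Icc (a := -x₀) (b := x₀)).prod
    (isCompact_Icc (a := -B) (b := B))).exists_bound_of_continuousOn
    ((vfun_cont' k t).continuousOn)
  set Cb : ℝ := |C| + 1 with hCb
  have hCb0 : 0 < Cb := by positivity
  set ε₀ : ℝ := min (η / Cb) ((x₀ ^ (2 * k))⁻¹) with hε₀def
  have hε₀pos : 0 < ε₀ := lt_min (by positivity) (by positivity)
  refine ⟨ε₀, hε₀pos, ?_⟩
  intro ε hε
  obtain ⟨hε0, hεε₀⟩ := hε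
  set R : ℝ := ε ^ (-(1:ℝ) / (2 * (k:ℝ))) with hRdef
  have hR0 : 0 < R := Real.rpow_pos_of_pos hε0 _
  have hexp : (-(1:ℝ) / (2 * (k:ℝ))) < 0 := by
    apply div_neg_of_neg_of_pos (by norm_num)
    positivity
  have hRε : R ^ (2 * k) = ε⁻¹ := by
    rw [hRdef, ← Real.rpow_natCast (ε ^ (-(1:ℝ) / (2 * (k:ℝ)))) (2 * k),
      ← Real.rpow_mul hε0.le]
    have he : (-(1:ℝ) / (2 * (k:ℝ))) * ((2 * k : ℕ) : ℝ) = -1 := by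
      push_cast
      field_simp
    rw [he, Real.rpow_neg_one]
  have hx₀R : x₀ < R := by
    have h1 : ε < (x₀ ^ (2 * k))⁻¹ := lt_of_lt_of_le hεε₀ (min_le_right _ _)
    have h2 := Real.rpow_lt_rpow_of_neg hε0 h1 hexp
    have h3 : ((x₀ ^ (2 * k) : ℝ)⁻¹) ^ (-(1:ℝ) / (2 * (k:ℝ))) = x₀ := by
      rw [← Real.rpow_natCast x₀ (2 * k), ← Real.rpow_neg hx₀0.le,
        ← Real.rpow_mul hx₀0.le]
      have he : (-(((2 * k : ℕ) : ℝ))) * (-(1:ℝ) / (2 * (k:ℝ))) = 1 := by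
        push_cast
        field_simp
      rw [he, Real.rpow_one]
    rw [h3] at h2
    exact h2
  -- the frontier estimate
  have hfront : ∀ p : Pt N, |p.1| ≤ R → (∑ j, (p.2 j) ^ 2) ≤ M →
      ¬(|p.1| < R ∧ (∑ j, (p.2 j) ^ 2) < M) → ueps N k t ε p ≤ 0 := by
    intro p h1 h2 h3
    push_neg at h3
    have hsum0 : 0 ≤ ∑ j, (p.2 j) ^ 2 := Finset.sum_nonneg fun j _ => sq_nonneg _
    have hsB : ∀ j, (p.2 j) ^ 2 ≤ B ^ 2 := by
      intro j
      have h4 : (p.2 j) ^ 2 ≤ ∑ i, (p.2 i) ^ 2 :=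
        Finset.single_le_sum (f := fun i => (p.2 i) ^ 2) (fun i _ => sq_nonneg _)
          (Finset.mem_univ j)
      linarith
    have hueq : ueps N k t ε p
        = (1/2) * ((N:ℝ) - ∑ j, (p.2 j) ^ 2) + ε * ∑ j, vfun k t p.1 (p.2 j) := rfl
    by_cases hx : x₀ ≤ |p.1|
    · -- far region: all v's very negative
      have hv : ∀ j, vfun k t p.1 (p.2 j) ≤ -(|p.1| ^ (2 * k)) / 2 :=
        fun j => hvneg _ _ hx (hsB j)
      have hsv : (∑ j, vfun k t p.1 (p.2 j)) ≤ (N:ℝ) * (-(|p.1| ^ (2 * k)) / 2) := by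
        calc (∑ j, vfun k t p.1 (p.2 j)) ≤ ∑ _j : Fin N, (-(|p.1| ^ (2 * k)) / 2) :=
              Finset.sum_le_sum fun j _ => hv j
          _ = (N:ℝ) * (-(|p.1| ^ (2 * k)) / 2) := by
              rw [Finset.sum_const, Finset.card_univ, Fintype.card_fin, nsmul_eq_mul]
      by_cases hxR : |p.1| < R
      · -- then the y-side is saturated
        have hM' := h3 hxR
        have hpow : 0 < |p.1| ^ (2 * k) := pow_pos (lt_of_lt_of_le hx₀0 hx) _
        have hvle0 : (∑ j, vfun k t p.1 (p.2 j)) ≤ 0 := by nlinarith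
        have hεv : ε * (∑ j, vfun k t p.1 (p.2 j)) ≤ 0 :=
          mul_nonpos_of_nonneg_of_nonpos hε0.le hvle0
        rw [hueq]
        nlinarith
      · -- x-side saturated: |p.1| = R
        have hRx : |p.1| = R := le_antisymm h1 (not_lt.mp hxR)
        rw [hRx, hRε] at hsv
        have hεv : ε * (∑ j, vfun k t p.1 (p.2 j)) ≤ ε * ((N:ℝ) * (-ε⁻¹ / 2)) :=
          mul_le_mul_of_nonneg_left hsv hε0.le
        have hεinv : ε * ((N:ℝ) * (-ε⁻¹ / 2)) = -(N:ℝ) / 2 := by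
          field_simp
        rw [hueq]
        rw [hεinv] at hεv
        linarith
    · -- central region: v's bounded, y-side saturated
      have hxR : |p.1| < R := lt_trans (not_le.mp hx) hx₀R
      have hM' := h3 hxR
      have hvj : ∀ j, vfun k t p.1 (p.2 j) ≤ Cb := by
        intro j
        have hax := abs_le.mp (not_le.mp hx).le
        have hay : |p.2 j| ≤ B := by nlinarith [sq_abs (p.2 j), abs_nonneg (p.2 j), hsB j]
        have hay' := abs_le.mp hay
        have hmem : ((p.1, p.2 j) : ℝ × ℝ) ∈ Set.Icc (-x₀) x₀ ×ˢ Set.Icc (-B) B :=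
          ⟨⟨hax.1, hax.2⟩, ⟨hay'.1, hay'.2⟩⟩
        have hb := hC _ hmem
        rw [Real.norm_eq_abs] at hb
        calc vfun k t p.1 (p.2 j) ≤ |vfun k t p.1 (p.2 j)| := le_abs_self _
          _ ≤ C := hb
          _ ≤ Cb := by rw [hCb]; linarith [le_abs_self C]
      have hsv : (∑ j, vfun k t p.1 (p.2 j)) ≤ (N:ℝ) * Cb := by
        calc (∑ j, vfun k t p.1 (p.2 j)) ≤ ∑ _j : Fin N, Cb :=
              Finset.sum_le_sum fun j _ => hvj j
          _ = (N:ℝ) * Cb := by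
              rw [Finset.sum_const, Finset.card_univ, Fintype.card_fin, nsmul_eq_mul]
      have hε' : ε ≤ η / Cb := le_of_lt (lt_of_lt_of_le hεε₀ (min_le_left _ _))
      have hεCb : ε * ((N:ℝ) * Cb) ≤ η * N := by
        calc ε * ((N:ℝ) * Cb) ≤ (η / Cb) * ((N:ℝ) * Cb) :=
              mul_le_mul_of_nonneg_right hε' (by positivity)
          _ = η * N := by field_simp
      have hεv : ε * (∑ j, vfun k t p.1 (p.2 j)) ≤ ε * ((N:ℝ) * Cb) :=
        mul_le_mul_of_nonneg_left hsv hε0.le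
      rw [hueq]
      linarith
  -- topology
  set Cset : Set (Pt N) := {p : Pt N | |p.1| < R ∧ ∑ j, (p.2 j) ^ 2 < M} with hCsetdef
  have hc1 : Continuous fun p : Pt N => |p.1| := continuous_fst.abs
  have hc2 : Continuous fun p : Pt N => ∑ j, (p.2 j) ^ 2 :=
    continuous_finset_sum _ fun j _ => ((continuous_apply j).comp continuous_snd).pow 2
  have hCopen : IsOpen Cset :=
    (isOpen_lt hc1 continuous_const).inter (isOpen_lt hc2 continuous_const)
  have hclosed : IsClosed {p : Pt N | |p.1| ≤ R ∧ (∑ j, (p.2 j) ^ 2) ≤ M} :=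
    (isClosed_le hc1 continuous_const).inter (isClosed_le hc2 continuous_const)
  show OmT N k t ε ⊆ Cset
  by_cases h0 : (0 : Pt N) ∈ {p : Pt N | 0 < ueps N k t ε p}
  · have hconn : IsPreconnected (OmT N k t ε) :=
      (isConnected_connectedComponentIn_iff.mpr h0).isPreconnected
    have h0mem : (0 : Pt N) ∈ OmT N k t ε := mem_connectedComponentIn h0
    have hsub : OmT N k t ε ⊆ {p : Pt N | 0 < ueps N k t ε p} :=
      connectedComponentIn_subset _ _
    have hcover : OmT N k t ε ⊆ Cset ∪ interior Csetᶜ := by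
      intro p hp
      by_cases hpc : p ∈ closure Cset
      · left
        by_contra hpC
        have hsub' : Cset ⊆ {p : Pt N | |p.1| ≤ R ∧ (∑ j, (p.2 j) ^ 2) ≤ M} := by
          intro q hq
          exact ⟨le_of_lt hq.1, le_of_lt hq.2⟩
        have hK' : p ∈ {p : Pt N | |p.1| ≤ R ∧ (∑ j, (p.2 j) ^ 2) ≤ M} :=
          closure_minimal hsub' hclosed hpc
        have hle := hfront p hK'.1 hK'.2 hpC
        exact absurd (hsub hp) (not_lt.mpr hle)
      · right
        have hpc' : p ∈ (closure Cset)ᶜ := hpc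
        rwa [← interior_compl] at hpc'
    have hdisj : Disjoint Cset (interior Csetᶜ) :=
      disjoint_compl_right.mono_right interior_subset
    have h0C : (0 : Pt N) ∈ Cset := by
      constructor
      · show |(0 : Pt N).1| < R
        simp only [Prod.fst_zero, abs_zero]
        exact hR0
      · show (∑ j, ((0 : Pt N).2 j) ^ 2) < M
        simp only [Prod.snd_zero, Pi.zero_apply]
        simpa using hM0
    exact hconn.subset_left_of_subset_union hCopen isOpen_interior hdisj hcover
      ⟨0, h0mem, h0C⟩
  · rw [OmT, connectedComponentIn_eq_empty h0]
    exact empty_subset _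
end
end

section
/- Let N ≥ 2, k ≥ 1, 0 < t₁ < … < t_k, v(t,s) = Re( −∏_{ℓ=1}^k ((t+is) − t_ℓ)((t+is) + t_ℓ) ), u_ε(x,y) = (1/2)(N − |y|²) + ε Σ_{j=1}^N v(x,y_j), and Ω_ε the connected component of {u_ε > 0} containing the origin. Then: (a) for every C > 0 and δ > 0 there exists ε₀ > 0 such that for all ε ∈ (0,ε₀), every boundary point (x,y) ∈ ∂Ω_ε with |x| ≤ C satisfies | |y|² − N | < δ; (b) for every δ > 0 there exist δ' > 0 and ε₀ > 0 such that for all ε ∈ (0,ε₀), every boundary point (x,y) ∈ ∂Ω_ε with |y| ≤ δ' satisfies | (2ε)^{1/(2k)} |x| − 1 | < δ. -/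
open MeasureTheory Set Filter Topology

noncomputable section

-- auxiliary lemmas
lemma ueps_cont (N k : ℕ) (t : Fin k → ℝ) (ε : ℝ) : Continuous (ueps N k t ε) := by
  unfold ueps vfun; fun_prop


lemma barrier {α} [TopologicalSpace α] {S U : Set α} {x : α} (hU : IsOpen U) (hx : x ∈ U)
    (h : ∀ p ∈ frontier U, p ∉ S) : connectedComponentIn S x ⊆ U := by
  by_cases hxS : x ∈ S
  · have hsub : S ⊆ U ∪ (closure U)ᶜ := by
      intro p hp
      by_cases hpc : p ∈ closure U
      · left
        by_contra hpU
        exact h p ⟨hpc, by rw [hU.interior_eq]; exact hpU⟩ hp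
      · exact Or.inr hpc
    refine IsPreconnected.subset_left_of_subset_union hU (isClosed_closure.isOpen_compl)
      (disjoint_compl_right.mono_left subset_closure) ((connectedComponentIn_subset S x).trans hsub)
      ⟨x, mem_connectedComponentIn hxS, hx⟩ isPreconnected_connectedComponentIn
  · rw [connectedComponentIn_eq_empty hxS]; exact empty_subset _


lemma frontier_zero {α} [TopologicalSpace α] [LocallyConnectedSpace α] {u : α → ℝ} (hu : Continuous u)
    {x : α} {p : α} (hp : p ∈ frontier (connectedComponentIn {q | 0 < u q} x)) : u p = 0 := by
  set S := {q | 0 < u q} with hS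
  have hSopen : IsOpen S := isOpen_lt continuous_const hu
  set Ω := connectedComponentIn S x with hΩ
  have hΩopen : IsOpen Ω := hSopen.connectedComponentIn
  have hpnot : p ∉ Ω := fun hmem => hp.2 (by rwa [hΩopen.interior_eq])
  have hpcl : p ∈ closure Ω := hp.1
  have hge : 0 ≤ u p := by
    have : p ∈ closure S := closure_mono (connectedComponentIn_subset S x) hpcl
    have h2 : closure S ⊆ {q | 0 ≤ u q} :=
      closure_minimal (fun q hq => le_of_lt (show 0 < u q from hq)) (isClosed_le continuous_const hu)
    exact h2 this
  rcases lt_or_eq_of_le hge with hlt | heq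
  · exfalso
    have hpS : p ∈ S := hlt
    have hopen' : IsOpen (connectedComponentIn S p) := hSopen.connectedComponentIn
    obtain ⟨q, hq1, hq2⟩ := mem_closure_iff.mp hpcl _ hopen' (mem_connectedComponentIn hpS)
    have e1 : connectedComponentIn S p = connectedComponentIn S q := connectedComponentIn_eq hq1
    have e2 : Ω = connectedComponentIn S q := connectedComponentIn_eq hq2
    exact hpnot (by rw [e2, ← e1]; exact mem_connectedComponentIn hpS)
  · exact heq.symm

lemma prodEst {k : ℕ} (t : Fin k → ℝ) (m : ℝ) (hm : ∀ l, (t l)^2 ≤ m) (hm0 : 0 ≤ m) (z : ℂ)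
    (F : Finset (Fin k)) :
    ‖(∏ l ∈ F, ((z - (t l : ℂ)) * (z + (t l : ℂ)))) - z ^ (2 * F.card)‖ ≤
      (‖z‖^2 + m)^F.card - (‖z‖^2)^F.card := by
  classical
  induction F using Finset.induction_on with
  | empty => simp
  | @insert a F ha ih =>
    have hfac : ∀ l : Fin k, (z - (t l : ℂ)) * (z + (t l : ℂ)) = z^2 - (t l : ℂ)^2 := by
      intro l; ring
    have hta : ‖((t a : ℂ))^2‖ ≤ m := by
      rw [norm_pow, Complex.norm_real, Real.norm_eq_abs, sq_abs]; exact hm a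
    have hnt : ‖z^2 - (t a : ℂ)^2‖ ≤ ‖z‖^2 + m := by
      calc ‖z^2 - (t a : ℂ)^2‖ ≤ ‖z^2‖ + ‖(t a : ℂ)^2‖ := norm_sub_le _ _
        _ ≤ ‖z‖^2 + m := by rw [norm_pow]; linarith
    rw [Finset.prod_insert ha, Finset.card_insert_of_notMem ha]
    set n := F.card
    set P := ∏ l ∈ F, ((z - (t l : ℂ)) * (z + (t l : ℂ))) with hP
    have key : (z - (t a : ℂ)) * (z + (t a : ℂ)) * P - z ^ (2 * (n+1)) =
        (z^2 - (t a : ℂ)^2) * (P - z ^ (2*n)) - (t a : ℂ)^2 * z^(2*n) := by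
      rw [hfac a, pow_mul, pow_mul]; ring
    have hzn : ‖z ^ (2*n)‖ = (‖z‖^2)^n := by rw [norm_pow, pow_mul]
    have h1 : ‖(z^2 - (t a : ℂ)^2) * (P - z ^ (2*n))‖ ≤
        (‖z‖^2 + m) * ((‖z‖^2 + m)^n - (‖z‖^2)^n) := by
      rw [norm_mul]
      exact mul_le_mul hnt ih (norm_nonneg _) (by positivity)
    have h2 : ‖(t a : ℂ)^2 * z^(2*n)‖ ≤ m * (‖z‖^2)^n := by
      rw [norm_mul, hzn]
      exact mul_le_mul_of_nonneg_right hta (by positivity)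
    calc ‖(z - (t a:ℂ)) * (z + (t a:ℂ)) * P - z ^ (2 * (n+1))‖
        ≤ ‖(z^2 - (t a : ℂ)^2) * (P - z ^ (2*n))‖ + ‖(t a : ℂ)^2 * z^(2*n)‖ := by
          rw [key]; exact norm_sub_le _ _
      _ ≤ (‖z‖^2 + m) * ((‖z‖^2 + m)^n - (‖z‖^2)^n) + m * (‖z‖^2)^n := add_le_add h1 h2
      _ = (‖z‖^2 + m)^(n+1) - (‖z‖^2)^(n+1) := by ring


lemma powDiff {𝕜 : Type*} [NormedField 𝕜] (z w : 𝕜) (M : ℝ) (hz : ‖z‖ ≤ M) (hw : ‖w‖ ≤ M) (n : ℕ) :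
    ‖z ^ (n+1) - w ^ (n+1)‖ ≤ (n+1) * ‖z - w‖ * M ^ n := by
  induction n with
  | zero => simp
  | succ n ih =>
    have hM : 0 ≤ M := le_trans (norm_nonneg z) hz
    have key : z ^ (n+2) - w ^ (n+2) = z ^ (n+1) * (z - w) + (z ^ (n+1) - w ^ (n+1)) * w := by ring
    have h1 : ‖z ^ (n+1) * (z - w)‖ ≤ M^(n+1) * ‖z - w‖ := by
      rw [norm_mul]
      exact mul_le_mul_of_nonneg_right
        ((norm_pow z (n+1)).le.trans (pow_le_pow_left₀ (norm_nonneg _) hz _)) (norm_nonneg _)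
    have h2 : ‖(z ^ (n+1) - w ^ (n+1)) * w‖ ≤ ((n+1) * ‖z - w‖ * M^n) * M := by
      rw [norm_mul]
      exact mul_le_mul ih hw (norm_nonneg _) (by positivity)
    calc ‖z ^ (n+2) - w ^ (n+2)‖ ≤ ‖z ^ (n+1) * (z - w)‖ + ‖(z ^ (n+1) - w ^ (n+1)) * w‖ := by
            rw [key]; exact norm_add_le _ _
      _ ≤ M^(n+1) * ‖z - w‖ + ((n+1) * ‖z - w‖ * M^n) * M := add_le_add h1 h2
      _ = (↑(n+1)+1) * ‖z - w‖ * M^(n+1) := by rw [pow_succ]; push_cast; ring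

lemma normz_sq (x s : ℝ) : ‖(x:ℂ) + (s:ℂ) * Complex.I‖^2 = x^2 + s^2 := by
  rw [Complex.norm_add_mul_I, Real.sq_sqrt (by positivity)]


lemma vfun_crude {k : ℕ} (t : Fin k → ℝ) (m : ℝ) (hm : ∀ l, (t l)^2 ≤ m) (hm0 : 0 ≤ m)
    (x s : ℝ) : |vfun k t x s| ≤ (x^2 + s^2 + m)^k := by
  set z : ℂ := (x:ℂ) + (s:ℂ) * Complex.I with hz
  have hcard : (Finset.univ : Finset (Fin k)).card = k := by simp
  have h1 := prodEst t m hm hm0 z Finset.univ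
  rw [hcard, normz_sq] at h1
  set P := ∏ l : Fin k, ((z - (t l : ℂ)) * (z + (t l : ℂ))) with hP
  have hzpow : ‖z^(2*k)‖ = (x^2+s^2)^k := by rw [norm_pow, pow_mul, normz_sq]
  have h2 : ‖P‖ ≤ (x^2 + s^2 + m)^k := by
    have : ‖P‖ ≤ ‖P - z^(2*k)‖ + ‖z^(2*k)‖ := by
      simpa using norm_add_le (P - z^(2*k)) (z^(2*k))
    rw [hzpow] at this
    linarith
  have h3 : |vfun k t x s| ≤ ‖P‖ := by
    have := Complex.abs_re_le_norm (-P)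
    rwa [norm_neg] at this
  linarith


set_option maxHeartbeats 1000000 in
lemma vfun_est {k : ℕ} (hk : 1 ≤ k) (t : Fin k → ℝ) (m : ℝ) (hm : ∀ l, (t l)^2 ≤ m)
    (hm0 : 0 ≤ m) (c η : ℝ) (hc : 1 ≤ c) (hη : 0 < η) :
    ∃ R : ℝ, 1 ≤ R ∧ ∀ x s : ℝ, |s| ≤ c → R ≤ |x| →
      |vfun k t x s + x^(2*k)| ≤ η * x^(2*k) := by
  obtain ⟨j, hj⟩ : ∃ j, k = j + 1 := ⟨k - 1, by omega⟩
  have hc0 : (0:ℝ) < c := lt_of_lt_of_le one_pos hc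
  have hcm : (0:ℝ) ≤ 1 + c^2 + m := by nlinarith
  set C₁ : ℝ := (j+1) * m * (1 + c^2 + m)^j with hC₁
  set C₂ : ℝ := (2*j+2) * c * ((1+c)^(2*j+1)) with hC₂
  set A : ℝ := C₁ + C₂ + 1 with hA
  have hC₁0 : 0 ≤ C₁ := mul_nonneg (mul_nonneg (by positivity) hm0) (pow_nonneg hcm j)
  have hC₂0 : 0 ≤ C₂ := by positivity
  have hA1 : 1 ≤ A := by simp only [hA]; linarith
  have hAη : 0 ≤ A / η := div_nonneg (by linarith) hη.le
  refine ⟨1 + A / η, by linarith, ?_⟩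
  intro x s hs hx
  have hx1 : 1 ≤ |x| := by linarith
  have hx2 : 1 ≤ x^2 := by rw [← sq_abs]; nlinarith
  set z : ℂ := (x:ℂ) + (s:ℂ) * Complex.I with hzdef
  set P := ∏ l : Fin k, ((z - (t l : ℂ)) * (z + (t l : ℂ))) with hP
  have hznorm : ‖z‖^2 = x^2 + s^2 := normz_sq x s
  have hzn0 : 0 ≤ ‖z‖^2 := sq_nonneg _
  have hs2 : s^2 ≤ c^2 := by rw [← sq_abs]; nlinarith [abs_nonneg s]
  have hwub : ‖z‖^2 + m ≤ (1 + c^2 + m) * x^2 := by rw [hznorm]; nlinarith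
  -- bound 1
  have hb1 : ‖P - z^(2*k)‖ ≤ C₁ * (x^2)^j := by
    have h1 := prodEst t m hm hm0 z Finset.univ
    have hcard : (Finset.univ : Finset (Fin k)).card = k := by simp
    rw [hcard] at h1
    refine h1.trans ?_
    have hM : 0 ≤ ‖z‖^2 + m := by linarith
    have hpd := powDiff (𝕜 := ℝ) (‖z‖^2 + m) (‖z‖^2) (‖z‖^2 + m)
      (by rw [Real.norm_eq_abs, abs_of_nonneg hM])
      (by rw [Real.norm_eq_abs, abs_of_nonneg hzn0]; linarith) j
    rw [Real.norm_eq_abs, Real.norm_eq_abs] at hpd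
    have hd : |(‖z‖^2 + m) - ‖z‖^2| = m := by
      rw [show (‖z‖^2 + m) - ‖z‖^2 = m by ring, abs_of_nonneg hm0]
    rw [hd] at hpd
    have hmono : (‖z‖^2+m)^j ≤ (1+c^2+m)^j * (x^2)^j := by
      rw [← mul_pow]
      exact pow_le_pow_left₀ hM hwub j
    calc (‖z‖^2 + m)^k - (‖z‖^2)^k ≤ |(‖z‖^2 + m)^(j+1) - (‖z‖^2)^(j+1)| := by
          rw [hj]; exact le_abs_self _
      _ ≤ ((j:ℝ)+1) * m * (‖z‖^2+m)^j := hpd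
      _ ≤ ((j:ℝ)+1) * m * ((1+c^2+m)^j * (x^2)^j) :=
          mul_le_mul_of_nonneg_left hmono (mul_nonneg (by positivity) hm0)
      _ = C₁ * (x^2)^j := by rw [hC₁]; ring
  -- bound 2
  have hb2 : ‖z^(2*k) - ((x:ℂ))^(2*k)‖ ≤ C₂ * |x|^(2*j+1) := by
    have hzle : ‖z‖ ≤ (1+c) * |x| := by
      calc ‖z‖ ≤ ‖(x:ℂ)‖ + ‖(s:ℂ) * Complex.I‖ := norm_add_le _ _
        _ = |x| + |s| := by simp [Complex.norm_real]
        _ ≤ (1+c) * |x| := by nlinarith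
    have hxle : ‖(x:ℂ)‖ ≤ (1+c) * |x| := by
      rw [Complex.norm_real, Real.norm_eq_abs]; nlinarith [abs_nonneg x]
    have h2k : 2*k = (2*j+1) + 1 := by omega
    have hpd := powDiff z ((x:ℂ)) ((1+c) * |x|) hzle hxle (2*j+1)
    rw [← h2k] at hpd
    refine hpd.trans ?_
    have hdz : ‖z - (x:ℂ)‖ = |s| := by
      rw [show z - (x:ℂ) = (s:ℂ) * Complex.I by rw [hzdef]; ring]
      simp [Complex.norm_real]
    rw [hdz, mul_pow]
    have hp1 : (0:ℝ) ≤ (1+c)^(2*j+1) := by positivity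
    have hp2 : (0:ℝ) ≤ |x|^(2*j+1) := by positivity
    have hcoef : (((2*j+1:ℕ):ℝ)+1) = 2*(j:ℝ)+2 := by push_cast; ring
    rw [hcoef, hC₂]
    have key : (2*(j:ℝ)+2) * |s| ≤ (2*(j:ℝ)+2) * c :=
      mul_le_mul_of_nonneg_left hs (by positivity)
    nlinarith [mul_le_mul_of_nonneg_right key (mul_nonneg hp1 hp2)]
  -- combine
  have hre : ((x:ℂ)^(2*k)).re = x^(2*k) := by
    rw [← Complex.ofReal_pow]; exact Complex.ofReal_re _
  have hveq : vfun k t x s = (-P).re := rfl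
  have hsplit : vfun k t x s + x^(2*k) = ((x:ℂ)^(2*k) - z^(2*k)).re + (z^(2*k) - P).re := by
    rw [hveq, Complex.neg_re, Complex.sub_re, Complex.sub_re, hre]; ring
  have habs : |vfun k t x s + x^(2*k)| ≤ A * |x|^(2*j+1) := by
    rw [hsplit]
    have e1 : |((x:ℂ)^(2*k) - z^(2*k)).re| ≤ ‖(x:ℂ)^(2*k) - z^(2*k)‖ :=
      Complex.abs_re_le_norm _
    have e2 : |(z^(2*k) - P).re| ≤ ‖z^(2*k) - P‖ := Complex.abs_re_le_norm _
    have e3 : ‖(x:ℂ)^(2*k) - z^(2*k)‖ = ‖z^(2*k) - (x:ℂ)^(2*k)‖ := norm_sub_rev _ _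
    have e4 : ‖z^(2*k) - P‖ = ‖P - z^(2*k)‖ := norm_sub_rev _ _
    have h5 : (x^2)^j ≤ |x|^(2*j+1) := by
      rw [← sq_abs, ← pow_mul]
      exact pow_le_pow_right₀ hx1 (by omega)
    have h6 := abs_add_le (((x:ℂ)^(2*k) - z^(2*k)).re) ((z^(2*k) - P).re)
    rw [e3] at e1; rw [e4] at e2
    have h7 : (0:ℝ) ≤ |x|^(2*j+1) := by positivity
    simp only [hA]
    nlinarith [hb1, hb2]
  refine habs.trans ?_
  have hxA : A ≤ η * |x| := by
    have : A / η ≤ |x| := by linarith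
    calc A = (A / η) * η := by field_simp
      _ ≤ |x| * η := mul_le_mul_of_nonneg_right this hη.le
      _ = η * |x| := mul_comm _ _
  calc A * |x|^(2*j+1) ≤ (η * |x|) * |x|^(2*j+1) :=
        mul_le_mul_of_nonneg_right hxA (by positivity)
    _ = η * |x|^(2*k) := by rw [hj]; ring
    _ = η * x^(2*k) := by rw [← abs_pow, abs_of_nonneg (by rw [pow_mul]; positivity)]

lemma vfun_upper {k : ℕ} (hk : 1 ≤ k) (t : Fin k → ℝ) (m : ℝ) (hm : ∀ l, (t l)^2 ≤ m)
    (hm0 : 0 ≤ m) (c : ℝ) (hc : 1 ≤ c) :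
    ∃ K : ℝ, 0 ≤ K ∧ ∀ x s : ℝ, |s| ≤ c → vfun k t x s ≤ K := by
  obtain ⟨R, hR1, hR⟩ := vfun_est hk t m hm hm0 c (1/2) hc (by norm_num)
  refine ⟨(R^2 + c^2 + m)^k, by positivity, ?_⟩
  intro x s hs
  rcases le_or_gt R |x| with h | h
  · have h1 := hR x s hs h
    have h2 : (0:ℝ) ≤ x^(2*k) := by rw [pow_mul]; positivity
    have h3 : vfun k t x s ≤ -x^(2*k) + (1/2) * x^(2*k) := by
      have := (abs_le.mp h1).2
      linarith
    calc vfun k t x s ≤ -(1/2) * x^(2*k) := by linarith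
      _ ≤ 0 := by linarith
      _ ≤ (R^2 + c^2 + m)^k := by positivity
  · have h1 := (abs_le.mp (vfun_crude t m hm hm0 x s)).2
    refine h1.trans (pow_le_pow_left₀ (by positivity) ?_ k)
    have hx2 : x^2 ≤ R^2 := by
      rw [← sq_abs]
      nlinarith [abs_nonneg x, h.le]
    have hs2 : s^2 ≤ c^2 := by
      rw [← sq_abs]; nlinarith [abs_nonneg s]
    linarith


lemma abs_sub_one_le_pow (T : ℝ) (hT : 0 ≤ T) (n : ℕ) (hn : 1 ≤ n) : |T - 1| ≤ |T^n - 1| := by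
  have hg := geom_sum_mul T n
  have hsum : (1:ℝ) ≤ ∑ i ∈ Finset.range n, T^i := by
    have h0 : (0:ℕ) ∈ Finset.range n := Finset.mem_range.mpr (by omega)
    calc (1:ℝ) = T^0 := by norm_num
      _ ≤ ∑ i ∈ Finset.range n, T^i :=
        Finset.single_le_sum (fun i _ => pow_nonneg hT i) h0
  calc |T - 1| = 1 * |T - 1| := (one_mul _).symm
    _ ≤ (∑ i ∈ Finset.range n, T^i) * |T - 1| :=
        mul_le_mul_of_nonneg_right hsum (abs_nonneg _)
    _ = |∑ i ∈ Finset.range n, T^i| * |T - 1| := by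
        rw [abs_of_nonneg (show (0:ℝ) ≤ ∑ i ∈ Finset.range n, T^i by linarith)]
    _ = |(∑ i ∈ Finset.range n, T^i) * (T - 1)| := (abs_mul _ _).symm
    _ = |T^n - 1| := by rw [hg]

lemma contain (N : ℕ) (hN : 2 ≤ N) (k : ℕ) (hk : 1 ≤ k) (t : Fin k → ℝ) (m : ℝ)
    (hm : ∀ l, (t l)^2 ≤ m) (hm0 : 0 ≤ m) :
    ∃ ε₁ > (0:ℝ), ∀ ε ∈ Ioo (0:ℝ) ε₁,
      OmT N k t ε ⊆ {p : Pt N | ∑ j, (p.2 j)^2 < N + 1} := by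
  set c : ℝ := Real.sqrt (N + 1) with hcdef
  have hN1 : (1:ℝ) ≤ (N:ℝ) + 1 := by
    have : (2:ℝ) ≤ N := by exact_mod_cast hN
    linarith
  have hc1 : 1 ≤ c := by
    rw [hcdef]
    nth_rewrite 1 [show (1:ℝ) = Real.sqrt 1 from Real.sqrt_one.symm]
    exact Real.sqrt_le_sqrt hN1
  have hcsq : c^2 = (N:ℝ) + 1 := Real.sq_sqrt (by linarith)
  obtain ⟨K, hK0, hK⟩ := vfun_upper hk t m hm hm0 c hc1
  refine ⟨1 / (2 * (N * K + 1)), by positivity, ?_⟩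
  intro ε hε
  have hεpos := hε.1
  have hεlt := hε.2
  set U : Set (Pt N) := {p : Pt N | ∑ j, (p.2 j)^2 < N + 1} with hUdef
  have hcontsum : Continuous (fun p : Pt N => ∑ j, (p.2 j)^2) := by fun_prop
  have hUopen : IsOpen U := isOpen_lt hcontsum continuous_const
  have h0U : (0 : Pt N) ∈ U := by
    simp only [hUdef, mem_setOf_eq]
    have h00 : ∀ j : Fin N, ((0:Pt N).2 j)^2 = 0 := fun j => by
      simp [Prod.snd_zero]
    rw [Finset.sum_congr rfl (fun j _ => h00 j), Finset.sum_const, smul_zero]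
    positivity
  refine (barrier hUopen h0U ?_)
  intro p hp hpS
  have hpe : ∑ j, (p.2 j)^2 = (N:ℝ) + 1 := by
    have := frontier_lt_subset_eq hcontsum (continuous_const (y := (N:ℝ)+1)) hp
    exact this
  -- each coordinate bounded
  have hyj : ∀ j, |p.2 j| ≤ c := by
    intro j
    have h1 : (p.2 j)^2 ≤ (N:ℝ) + 1 := by
      rw [← hpe]
      exact Finset.single_le_sum (f := fun j => (p.2 j)^2) (fun i _ => sq_nonneg _)
        (Finset.mem_univ j)
    calc |p.2 j| = Real.sqrt ((p.2 j)^2) := (Real.sqrt_sq_eq_abs _).symm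
      _ ≤ Real.sqrt ((N:ℝ)+1) := Real.sqrt_le_sqrt h1
      _ = c := rfl
  have hvsum : ∑ j, vfun k t p.1 (p.2 j) ≤ N * K := by
    calc ∑ j, vfun k t p.1 (p.2 j) ≤ ∑ _j : Fin N, K :=
          Finset.sum_le_sum (fun j _ => hK p.1 (p.2 j) (hyj j))
      _ = N * K := by simp [Finset.sum_const, Finset.card_univ, nsmul_eq_mul]
  have hεNK : ε * (N * K) < 1/2 := by
    have hNK0 : (0:ℝ) ≤ (N:ℝ) * K := by positivity
    calc ε * ((N:ℝ) * K) ≤ ε * ((N:ℝ) * K + 1) := by nlinarith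
      _ < (1 / (2 * ((N:ℝ) * K + 1))) * ((N:ℝ) * K + 1) :=
          mul_lt_mul_of_pos_right hεlt (by positivity)
      _ = 1/2 := by
          have : (N:ℝ) * K + 1 ≠ 0 := by positivity
          field_simp
  have : ueps N k t ε p < 0 := by
    rw [ueps, hpe]
    have h2 : ε * ∑ j, vfun k t p.1 (p.2 j) ≤ ε * (N * K) :=
      mul_le_mul_of_nonneg_left hvsum hεpos.le
    have h3 : (1/2 : ℝ) * ((N:ℝ) - ((N:ℝ)+1)) = -(1/2) := by ring
    rw [h3]
    linarith
  exact absurd hpS (by simp only [mem_setOf_eq]; linarith)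


set_option maxHeartbeats 2000000 in
theorem statement13 (N : ℕ) (hN : 2 ≤ N) (k : ℕ) (hk : 1 ≤ k)
    (t : Fin k → ℝ) (ht : StrictMono t) (htpos : ∀ i, 0 < t i) :
    -- (a) boundary points with bounded |x| have |y|² close to N
    (∀ C > (0:ℝ), ∀ δ > (0:ℝ), ∃ ε₀ > (0:ℝ), ∀ ε ∈ Ioo (0:ℝ) ε₀,
      ∀ p ∈ frontier (OmT N k t ε), |p.1| ≤ C →
        |(∑ j, (p.2 j) ^ 2) - (N : ℝ)| < δ) ∧
    -- (b) boundary points with small |y| have |x| ≈ (2ε)^{−1/(2k)}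
    (∀ δ > (0:ℝ), ∃ δ' > (0:ℝ), ∃ ε₀ > (0:ℝ), ∀ ε ∈ Ioo (0:ℝ) ε₀,
      ∀ p ∈ frontier (OmT N k t ε), Real.sqrt (∑ j, (p.2 j) ^ 2) ≤ δ' →
        |(2 * ε) ^ ((1:ℝ) / (2 * (k:ℝ))) * |p.1| - 1| < δ) := by

  have hN2 : (2:ℝ) ≤ (N:ℝ) := by exact_mod_cast hN
  have hNpos : (0:ℝ) < (N:ℝ) := by linarith
  set m : ℝ := ∑ l : Fin k, (t l)^2 with hmdef
  have hm : ∀ l, (t l)^2 ≤ m :=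
    fun l => Finset.single_le_sum (f := fun l => (t l)^2) (fun i _ => sq_nonneg _)
      (Finset.mem_univ l)
  have hm0 : 0 ≤ m := Finset.sum_nonneg (fun i _ => sq_nonneg _)
  obtain ⟨ε₁, hε₁pos, hcont⟩ := contain N hN k hk t m hm hm0
  have hcontsum : Continuous (fun p : Pt N => ∑ j, (p.2 j)^2) := by fun_prop
  constructor
  · -- part (a)
    intro C hC δ hδ
    set KC : ℝ := (C^2 + ((N:ℝ)+1) + m)^k with hKC
    have hKC0 : 0 ≤ KC := pow_nonneg (by nlinarith [sq_nonneg C]) k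
    have hD : (0:ℝ) < 2*(N:ℝ)*KC + 1 := by nlinarith
    refine ⟨min ε₁ (δ / (2*(N:ℝ)*KC + 1)), lt_min hε₁pos (div_pos hδ hD), ?_⟩
    intro ε hε p hp hpx
    have hεpos := hε.1
    have hu0 : ueps N k t ε p = 0 := frontier_zero (ueps_cont N k t ε) hp
    have hsle : ∑ j, (p.2 j)^2 ≤ (N:ℝ)+1 := by
      have h1 : p ∈ closure (OmT N k t ε) := hp.1
      have h2 := closure_mono (hcont ε ⟨hε.1, lt_of_lt_of_le hε.2 (min_le_left _ _)⟩) h1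
      have h3 : closure {q : Pt N | ∑ j, (q.2 j)^2 < (N:ℝ)+1} ⊆
          {q : Pt N | ∑ j, (q.2 j)^2 ≤ (N:ℝ)+1} :=
        closure_lt_subset_le hcontsum continuous_const
      exact h3 h2
    have hyj2 : ∀ j, (p.2 j)^2 ≤ (N:ℝ)+1 := by
      intro j
      refine le_trans ?_ hsle
      exact Finset.single_le_sum (f := fun j => (p.2 j)^2) (fun i _ => sq_nonneg _)
        (Finset.mem_univ j)
    have hvb : ∀ j, |vfun k t p.1 (p.2 j)| ≤ KC := by
      intro j
      refine (vfun_crude t m hm hm0 _ _).trans ?_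
      refine pow_le_pow_left₀ (by nlinarith [sq_nonneg p.1, sq_nonneg (p.2 j)]) ?_ k
      have : p.1^2 ≤ C^2 := by nlinarith [abs_nonneg p.1, sq_abs p.1]
      linarith [hyj2 j]
    set V : ℝ := ∑ j, vfun k t p.1 (p.2 j) with hV
    have hVb : |V| ≤ (N:ℝ) * KC := by
      calc |V| ≤ ∑ j, |vfun k t p.1 (p.2 j)| := Finset.abs_sum_le_sum_abs _ _
        _ ≤ ∑ _j : Fin N, KC := Finset.sum_le_sum (fun j _ => hvb j)
        _ = (N:ℝ) * KC := by simp [Finset.sum_const, Finset.card_univ, nsmul_eq_mul]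
    rw [ueps] at hu0
    have heq : (∑ j, (p.2 j)^2) - (N:ℝ) = 2*(ε*V) := by
      simp only [← hV] at hu0
      linarith
    have hεδ : ε < δ / (2*(N:ℝ)*KC + 1) := lt_of_lt_of_le hε.2 (min_le_right _ _)
    have hεD : ε * (2*(N:ℝ)*KC + 1) < δ := (lt_div_iff₀ hD).mp hεδ
    calc |(∑ j, (p.2 j)^2) - (N:ℝ)| = 2*(ε*|V|) := by
          rw [heq, abs_mul, abs_mul, abs_of_pos hεpos, abs_of_nonneg (by norm_num : (0:ℝ) ≤ 2)]
      _ ≤ 2*(ε*((N:ℝ)*KC)) := by nlinarith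
      _ < δ := by nlinarith
  · -- part (b)
    intro δ hδ
    set δt : ℝ := min δ 1 with hδt
    have hδtpos : 0 < δt := lt_min hδ one_pos
    have hδt1 : δt ≤ 1 := min_le_right _ _
    have hδtδ : δt ≤ δ := min_le_left _ _
    set η : ℝ := δt / 8 with hη
    have hηpos : 0 < η := by positivity
    obtain ⟨R, hR1, hest⟩ := vfun_est hk t m hm hm0 1 η le_rfl hηpos
    set d2 : ℝ := min 1 (min ((N:ℝ)/2) ((N:ℝ)*δt/8)) with hd2
    have hd2pos : 0 < d2 := by
      refine lt_min one_pos (lt_min (by linarith) (by positivity))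
    have hd21 : d2 ≤ 1 := min_le_left _ _
    have hd2N : d2 ≤ (N:ℝ)/2 := le_trans (min_le_right _ _) (min_le_left _ _)
    have hd2δ : d2 ≤ (N:ℝ)*δt/8 := le_trans (min_le_right _ _) (min_le_right _ _)
    set Q : ℝ := (R^2 + 1 + m)^k with hQ
    have hQpos : 0 < Q := pow_pos (by nlinarith) k
    refine ⟨Real.sqrt d2, Real.sqrt_pos.mpr hd2pos, 1/(4*Q), by positivity, ?_⟩
    intro ε hε p hp hpy
    have hεpos := hε.1
    have hu0 : ueps N k t ε p = 0 := frontier_zero (ueps_cont N k t ε) hp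
    set S : ℝ := ∑ j, (p.2 j)^2 with hS
    have hS0 : 0 ≤ S := Finset.sum_nonneg (fun i _ => sq_nonneg _)
    have hSd : S ≤ d2 := by
      have h1 : Real.sqrt S ^ 2 ≤ Real.sqrt d2 ^ 2 :=
        pow_le_pow_left₀ (Real.sqrt_nonneg S) hpy 2
      rwa [Real.sq_sqrt hS0, Real.sq_sqrt hd2pos.le] at h1
    have hyj1 : ∀ j, |p.2 j| ≤ 1 := by
      intro j
      have h1 : (p.2 j)^2 ≤ 1 := by
        refine le_trans ?_ (hSd.trans hd21)
        exact Finset.single_le_sum (f := fun j => (p.2 j)^2) (fun i _ => sq_nonneg _)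
          (Finset.mem_univ j)
      rw [← Real.sqrt_one, ← Real.sqrt_sq_eq_abs]
      exact Real.sqrt_le_sqrt h1
    set V : ℝ := ∑ j, vfun k t p.1 (p.2 j) with hV
    rw [ueps] at hu0
    have heq : (N:ℝ) - S + 2*(ε*V) = 0 := by
      simp only [← hV, ← hS] at hu0
      linarith
    -- lower bound on |p.1|
    have hcr : ∀ j, |vfun k t p.1 (p.2 j)| ≤ (p.1^2 + 1 + m)^k := by
      intro j
      refine (vfun_crude t m hm hm0 _ _).trans ?_
      refine pow_le_pow_left₀ (by nlinarith [sq_nonneg p.1, sq_nonneg (p.2 j)]) ?_ k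
      have h1 : (p.2 j)^2 ≤ 1 := by nlinarith [hyj1 j, abs_nonneg (p.2 j), sq_abs (p.2 j)]
      linarith
    have hVle : |V| ≤ (N:ℝ) * (p.1^2 + 1 + m)^k := by
      calc |V| ≤ ∑ j, |vfun k t p.1 (p.2 j)| := Finset.abs_sum_le_sum_abs _ _
        _ ≤ ∑ _j : Fin N, (p.1^2 + 1 + m)^k := Finset.sum_le_sum (fun j _ => hcr j)
        _ = (N:ℝ) * (p.1^2 + 1 + m)^k := by
            simp [Finset.sum_const, Finset.card_univ, nsmul_eq_mul]
    have hxR : R ≤ |p.1| := by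
      have hNS : (N:ℝ)/2 ≤ (N:ℝ) - S := by linarith [hSd.trans hd2N]
      have hεV : ε * (-V) ≥ (N:ℝ)/4 := by linarith
      have h2 : (N:ℝ)/4 ≤ ε * ((N:ℝ) * (p.1^2 + 1 + m)^k) := by
        have : -V ≤ |V| := neg_le_abs _
        nlinarith
      have hεQ : ε < 1/(4*Q) := hε.2
      have h3 : Q < (p.1^2 + 1 + m)^k := by
        by_contra hcon
        push_neg at hcon
        have h4 : ε * ((N:ℝ) * (p.1^2 + 1 + m)^k) ≤ ε * ((N:ℝ) * Q) :=
          mul_le_mul_of_nonneg_left (mul_le_mul_of_nonneg_left hcon hNpos.le) hεpos.le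
        have h5 : ε * ((N:ℝ) * Q) < (1/(4*Q)) * ((N:ℝ) * Q) := by
          apply mul_lt_mul_of_pos_right hεQ
          positivity
        have h6 : (1/(4*Q)) * ((N:ℝ) * Q) = (N:ℝ)/4 := by field_simp
        linarith
      have h7 : R^2 ≤ p.1^2 := by
        by_contra hcon
        push_neg at hcon
        have : (p.1^2 + 1 + m)^k ≤ Q := by
          apply pow_le_pow_left₀ (by nlinarith [sq_nonneg p.1]) (by linarith) k
        linarith
      calc R = Real.sqrt (R^2) := (Real.sqrt_sq (by linarith)).symm
        _ ≤ Real.sqrt (p.1^2) := Real.sqrt_le_sqrt h7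
        _ = |p.1| := Real.sqrt_sq_eq_abs _
    -- main estimate
    set X : ℝ := p.1^(2*k) with hX
    have hX0 : 0 ≤ X := by rw [hX, pow_mul]; positivity
    have hE : |V + (N:ℝ)*X| ≤ (N:ℝ)*(η*X) := by
      have hsum : V + (N:ℝ)*X = ∑ j, (vfun k t p.1 (p.2 j) + X) := by
        rw [Finset.sum_add_distrib, Finset.sum_const, Finset.card_univ]
        simp [nsmul_eq_mul, hV]
      rw [hsum]
      calc |∑ j, (vfun k t p.1 (p.2 j) + X)| ≤ ∑ j, |vfun k t p.1 (p.2 j) + X| :=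
            Finset.abs_sum_le_sum_abs _ _
        _ ≤ ∑ _j : Fin N, η*X := Finset.sum_le_sum (fun j _ => hest p.1 (p.2 j) (hyj1 j) hxR)
        _ = (N:ℝ)*(η*X) := by simp [Finset.sum_const, Finset.card_univ, nsmul_eq_mul]
    set W : ℝ := 2*ε*X with hW
    have hW0 : 0 ≤ W := by positivity
    -- N*W - N = 2ε(V + NX) - S + ... derive
    have hkey : (N:ℝ)*W - (N:ℝ) = 2*(ε*(V + (N:ℝ)*X)) - S := by
      rw [hW]; ring_nf; ring_nf at heq; linarith
    have h1 : |(N:ℝ)*W - (N:ℝ)| ≤ d2 + η*((N:ℝ)*W) := by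
      rw [hkey]
      have h2 : |2*(ε*(V + (N:ℝ)*X)) - S| ≤ 2*(ε*|V + (N:ℝ)*X|) + S := by
        have := abs_sub_abs_le_abs_sub (2*(ε*(V + (N:ℝ)*X))) S
        have h3 : |2*(ε*(V + (N:ℝ)*X))| = 2*(ε*|V + (N:ℝ)*X|) := by
          rw [abs_mul, abs_mul, abs_of_pos hεpos, abs_of_nonneg (by norm_num : (0:ℝ) ≤ 2)]
        calc |2*(ε*(V + (N:ℝ)*X)) - S| ≤ |2*(ε*(V + (N:ℝ)*X))| + |S| := abs_sub _ _
          _ = 2*(ε*|V + (N:ℝ)*X|) + S := by rw [h3, abs_of_nonneg hS0]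
      refine h2.trans ?_
      have h4 : 2*(ε*|V + (N:ℝ)*X|) ≤ 2*(ε*((N:ℝ)*(η*X))) := by nlinarith
      have h5 : 2*(ε*((N:ℝ)*(η*X))) = η*((N:ℝ)*W) := by rw [hW]; ring
      linarith [hSd]
    -- W ≤ 2
    have hWle : W ≤ 2 := by
      by_contra hcon
      push_neg at hcon
      have h2 : (N:ℝ)*W - (N:ℝ) ≤ d2 + η*((N:ℝ)*W) := le_trans (le_abs_self _) h1
      have h3 : η ≤ 1/8 := by rw [hη]; linarith
      nlinarith [mul_pos hNpos (show (0:ℝ) < W - 2 by linarith)]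
    -- conclude
    have hfin : (N:ℝ) * |W - 1| < (N:ℝ) * δt := by
      have h2 : (N:ℝ) * |W - 1| = |(N:ℝ)*W - (N:ℝ)| := by
        rw [show (N:ℝ)*W - (N:ℝ) = (N:ℝ)*(W-1) by ring, abs_mul, abs_of_pos hNpos]
      rw [h2]
      have h3 : d2 + η*((N:ℝ)*W) ≤ (N:ℝ)*δt/8 + (δt/8)*((N:ℝ)*2) := by
        have : η*((N:ℝ)*W) ≤ (δt/8)*((N:ℝ)*2) := by
          rw [hη]; nlinarith
        linarith [hd2δ]
      have h4 : (N:ℝ)*δt/8 + (δt/8)*((N:ℝ)*2) < (N:ℝ)*δt := by nlinarith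
      linarith
    have hWδ : |W - 1| < δt := by
      by_contra hcon
      push_neg at hcon
      nlinarith
    -- T^{2k} = W
    set T : ℝ := (2 * ε) ^ ((1:ℝ) / (2 * (k:ℝ))) * |p.1| with hT
    have hT0 : 0 ≤ T := mul_nonneg (Real.rpow_nonneg (by linarith) _) (abs_nonneg _)
    have hTpow : T^(2*k) = W := by
      rw [hT, mul_pow]
      have hk0 : (2*(k:ℝ)) ≠ 0 := by
        have : (1:ℝ) ≤ (k:ℝ) := by exact_mod_cast hk
        positivity
      have e1 : ((2*ε) ^ ((1:ℝ) / (2 * (k:ℝ))))^(2*k) = 2*ε := by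
        rw [← Real.rpow_natCast ((2*ε) ^ ((1:ℝ) / (2 * (k:ℝ)))) (2*k),
          ← Real.rpow_mul (by linarith : (0:ℝ) ≤ 2*ε)]
        have e2 : (1:ℝ) / (2 * (k:ℝ)) * ((2*k : ℕ) : ℝ) = 1 := by
          push_cast
          field_simp
        rw [e2, Real.rpow_one]
      have e3 : |p.1|^(2*k) = X := by
        rw [hX, ← abs_pow, abs_of_nonneg (by rw [pow_mul]; positivity)]
      rw [e1, e3, hW]
    calc |T - 1| ≤ |T^(2*k) - 1| := abs_sub_one_le_pow T hT0 (2*k) (by omega)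
      _ = |W - 1| := by rw [hTpow]
      _ < δt := hWδ
      _ ≤ δ := hδtδ
end
end

section
/- Let N ≥ 2 and k ∈ ℕ, k ≥ 1, with 0 < t₁ < … < t_k. Define v(t,s) = Re( −∏_{ℓ=1}^k ((t+is) − t_ℓ)((t+is) + t_ℓ) ) and u_ε(x,y) = (1/2)(N − |y|²) + ε Σ_{j=1}^N v(x,y_j) on ℝ × ℝ^N. Then there exists ε₀ > 0 such that for all ε ∈ (0,ε₀), u_ε has at least k distinct nondegenerate local maximum points, i.e. at least k points p with ∇u_ε(p) = 0 and the Hessian matrix of u_ε at p negative definite; these points can be taken of the form (±t̄, 0, …, 0) where t̄ ranges over the local maximum points of q(t) = v(t,0) = −∏_{ℓ=1}^k (t² − t_ℓ²). -/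
open MeasureTheory Set Filter Topology

noncomputable section

/-- Second directional derivative of `u` at `p` along `w`. -/
def D2 {N : ℕ} (u : Pt N → ℝ) (w : Pt N) (p : Pt N) : ℝ :=
  fderiv ℝ (fun q => fderiv ℝ u q w) p w

open Polynomial

/-- The real polynomial `-∏ (X - tℓ)(X + tℓ)`. -/
def Prl (k : ℕ) (t : Fin k → ℝ) : Polynomial ℝ :=
  -(∏ l : Fin k, ((X - C (t l)) * (X + C (t l))))

lemma Prl_eval (k : ℕ) (t : Fin k → ℝ) (x : ℝ) :
    (Prl k t).eval x = -∏ l : Fin k, ((x - t l) * (x + t l)) := by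
  simp [Prl, eval_prod]

lemma Prl_monic_prod (k : ℕ) (t : Fin k → ℝ) :
    (∏ l : Fin k, ((X - C (t l)) * (X + C (t l)))).Monic :=
  monic_prod_of_monic _ _ fun l _ => (monic_X_sub_C _).mul (monic_X_add_C _)

lemma Prl_ne_zero (k : ℕ) (t : Fin k → ℝ) : Prl k t ≠ 0 := by
  simpa [Prl, neg_eq_zero] using (Prl_monic_prod k t).ne_zero

lemma Prl_natDegree (k : ℕ) (t : Fin k → ℝ) : (Prl k t).natDegree = 2 * k := by
  rw [Prl, natDegree_neg, natDegree_prod]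
  · have h2 : ∀ l : Fin k, ((X - C (t l)) * (X + C (t l))).natDegree = 2 := by
      intro l
      rw [natDegree_mul (X_sub_C_ne_zero (t l)) ((monic_X_add_C (t l)).ne_zero),
        natDegree_X_sub_C, natDegree_X_add_C]
    simp only [h2, Finset.sum_const, Finset.card_univ, Fintype.card_fin, smul_eq_mul]
    omega
  · intro l _
    exact ((monic_X_sub_C _).mul (monic_X_add_C _)).ne_zero

/-- A real polynomial of degree `≤ card S` whose roots include the distinct set `S` has only
simple roots. -/
lemma simple_roots (f : Polynomial ℝ) (hf0 : f ≠ 0) (S : Finset ℝ)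
    (hS : ∀ c ∈ S, f.eval c = 0) (hdeg : f.natDegree ≤ S.card) :
    ∀ c, f.eval c = 0 → f.derivative.eval c ≠ 0 := by
  classical
  intro c hc hdc
  have hd0 : f.derivative ≠ 0 := by
    intro h
    have h0 : f.natDegree = 0 := natDegree_eq_zero_of_derivative_eq_zero h
    obtain ⟨a, ha⟩ := natDegree_eq_zero.1 h0
    rw [← ha] at hc hf0
    rw [eval_C] at hc
    rw [hc] at hf0
    exact hf0 (map_zero C)
  have hsub : S.val ≤ f.roots := by
    refine Finset.val_le_iff_val_subset.2 ?_
    intro x hx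
    rw [mem_roots hf0]
    exact hS x hx
  have heq : S.val = f.roots := by
    refine Multiset.eq_of_le_of_card_le hsub ?_
    calc Multiset.card f.roots ≤ f.natDegree := f.card_roots'
      _ ≤ S.card := hdeg
  have hcS : c ∈ S := by
    have h1 : c ∈ f.roots := (mem_roots hf0).2 hc
    rw [← heq] at h1
    exact h1
  have hm1 : rootMultiplicity c f = 1 := by
    rw [← count_roots, ← heq]
    exact Multiset.count_eq_one_of_mem S.nodup hcS
  have h2 : rootMultiplicity c f.derivative = 0 := by
    rw [derivative_rootMultiplicity_of_root hc, hm1]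
  have h3 : 0 < rootMultiplicity c f.derivative := (rootMultiplicity_pos hd0).2 hdc
  omega

/-- Second derivative test direction we need: at a local max with nonvanishing second
derivative, the second derivative is negative. -/
lemma second_test (f : Polynomial ℝ) (c : ℝ)
    (hmax : IsLocalMax (fun x => f.eval x) c)
    (hne : f.derivative.derivative.eval c ≠ 0) :
    f.derivative.derivative.eval c < 0 := by
  rcases lt_or_gt_of_ne hne with h | h
  · exact h
  exfalso
  have hf' : f.derivative.eval c = 0 := by
    have h0 := hmax.deriv_eq_zero
    rwa [Polynomial.deriv] at h0
  have hcont : ContinuousAt (fun x => f.derivative.derivative.eval x) c :=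
    (f.derivative.derivative.continuous).continuousAt
  have hev : ∀ᶠ x in 𝓝 c, 0 < f.derivative.derivative.eval x :=
    hcont.eventually (eventually_gt_nhds h)
  obtain ⟨δ, hδpos, hδ⟩ := Metric.eventually_nhds_iff.1 hev
  have hmono : StrictMonoOn (fun x => f.derivative.eval x) (Icc (c - δ/2) (c + δ/2)) := by
    apply strictMonoOn_of_deriv_pos (convex_Icc _ _)
      ((f.derivative.continuous).continuousOn)
    intro x hx
    rw [interior_Icc] at hx
    rw [Polynomial.deriv]
    apply hδ
    rw [Real.dist_eq, abs_lt]
    constructor <;> [linarith [hx.1]; linarith [hx.2]]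
  have hneg : ∀ x ∈ Ioo (c - δ/2) c, f.derivative.eval x < 0 := by
    intro x hx
    have hcmem : c ∈ Icc (c - δ/2) (c + δ/2) := ⟨by linarith, by linarith⟩
    have hxmem : x ∈ Icc (c - δ/2) (c + δ/2) := ⟨le_of_lt hx.1, by linarith [hx.2]⟩
    have h1 := hmono hxmem hcmem hx.2
    simpa [hf'] using h1
  have hanti : StrictAntiOn (fun x => f.eval x) (Icc (c - δ/2) c) := by
    apply strictAntiOn_of_deriv_neg (convex_Icc _ _) ((f.continuous).continuousOn)
    intro x hx
    rw [interior_Icc] at hx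
    rw [Polynomial.deriv]
    exact hneg x hx
  have h1 : ∀ᶠ x in 𝓝[<] c, f.eval x ≤ f.eval c := hmax.filter_mono nhdsWithin_le_nhds
  have h2 : ∀ᶠ x in 𝓝[<] c, f.eval c < f.eval x := by
    filter_upwards [Ioo_mem_nhdsLT (by linarith : c - δ/2 < c)] with x hx
    exact hanti ⟨le_of_lt hx.1, le_of_lt hx.2⟩ ⟨by linarith, le_refl c⟩ hx.2
  obtain ⟨x, hx1, hx2⟩ := (h1.and h2).exists
  linarith

/-- sorted roots of `Prl k t` : `-t_{k-1} < ... < -t_0 < t_0 < ... < t_{k-1}`. -/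
def rfun (k : ℕ) (t : Fin k → ℝ) (i : ℕ) : ℝ :=
  if h : i < k then -t ⟨k - 1 - i, by omega⟩
  else if h2 : i < 2 * k then t ⟨i - k, by omega⟩ else 0

lemma rfun_lt (k : ℕ) (t : Fin k → ℝ) (ht : StrictMono t) (htpos : ∀ i, 0 < t i) :
    ∀ i j : ℕ, i < j → j < 2 * k → rfun k t i < rfun k t j := by
  intro i j hij hj
  unfold rfun
  by_cases hik : i < k
  · rw [dif_pos hik]
    by_cases hjk : j < k
    · rw [dif_pos hjk]
      have h1 := ht (show (⟨k - 1 - j, by omega⟩ : Fin k) < ⟨k - 1 - i, by omega⟩ from by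
        rw [Fin.mk_lt_mk]; omega)
      linarith
    · rw [dif_neg hjk, dif_pos hj]
      have h1 := htpos ⟨k - 1 - i, by omega⟩
      have h2 := htpos ⟨j - k, by omega⟩
      linarith
  · rw [dif_neg hik, dif_pos (by omega : i < 2 * k), dif_neg (by omega : ¬ j < k), dif_pos hj]
    exact ht (by rw [Fin.mk_lt_mk]; omega)

lemma rfun_root (k : ℕ) (t : Fin k → ℝ) (i : ℕ) (hi : i < 2 * k) :
    (Prl k t).eval (rfun k t i) = 0 := by
  rw [Prl_eval, neg_eq_zero]
  unfold rfun
  by_cases hik : i < k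
  · rw [dif_pos hik]
    exact Finset.prod_eq_zero (Finset.mem_univ (⟨k - 1 - i, by omega⟩ : Fin k)) (by ring)
  · rw [dif_neg hik, dif_pos hi]
    exact Finset.prod_eq_zero (Finset.mem_univ (⟨i - k, by omega⟩ : Fin k)) (by ring)

lemma rfun_neg_left (k : ℕ) (hk : 1 ≤ k) (t : Fin k → ℝ) (ht : StrictMono t)
    (htpos : ∀ i, 0 < t i) (x : ℝ) (hx : x < rfun k t 0) : (Prl k t).eval x < 0 := by
  have h0 : rfun k t 0 = -t ⟨k - 1, by omega⟩ := by
    unfold rfun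
    rw [dif_pos (by omega)]
    norm_num
  rw [h0] at hx
  rw [Prl_eval, neg_lt, neg_zero]
  apply Finset.prod_pos
  intro l _
  have hle : t l ≤ t ⟨k - 1, by omega⟩ := ht.monotone (Fin.le_def.2 (by
    have := l.isLt; simp; omega))
  have hp := htpos l
  apply mul_pos_of_neg_of_neg <;> linarith

/-- The 1-D core: `Prl k t` has at least `k` nondegenerate local maxima. -/
lemma oneD (k : ℕ) (hk : 1 ≤ k) (t : Fin k → ℝ) (ht : StrictMono t)
    (htpos : ∀ i, 0 < t i) :
    ∃ C : Finset ℝ, k ≤ C.card ∧ ∀ c ∈ C,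
      IsLocalMax (fun x => (Prl k t).eval x) c ∧
      (Prl k t).derivative.eval c = 0 ∧
      (Prl k t).derivative.derivative.eval c < 0 := by
  classical
  have hrlt : ∀ i j : ℕ, i < j → j < 2 * k → rfun k t i < rfun k t j := rfun_lt k t ht htpos
  have hroot : ∀ i, i < 2 * k → (Prl k t).eval (rfun k t i) = 0 :=
    fun i hi => rfun_root k t i hi
  have hSP : ((Finset.range (2 * k)).image (rfun k t)).card = 2 * k := by
    rw [Finset.card_image_of_injOn, Finset.card_range]
    intro i hi j hj hij
    simp only [Finset.coe_range, Set.mem_Iio] at hi hj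
    rcases lt_trichotomy i j with h | h | h
    · exact absurd hij (ne_of_lt (hrlt i j h hj))
    · exact h
    · exact absurd hij.symm (ne_of_lt (hrlt j i h hi))
  have hsimple : ∀ c, (Prl k t).eval c = 0 → (Prl k t).derivative.eval c ≠ 0 := by
    refine simple_roots _ (Prl_ne_zero k t) ((Finset.range (2 * k)).image (rfun k t)) ?_ ?_
    · intro c hc
      obtain ⟨i, hi, rfl⟩ := Finset.mem_image.1 hc
      exact hroot i (Finset.mem_range.1 hi)
    · rw [hSP, Prl_natDegree]
  have hrolle : ∀ j, j < 2 * k - 1 →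
      ∃ x, x ∈ Ioo (rfun k t j) (rfun k t (j + 1)) ∧ (Prl k t).derivative.eval x = 0 := by
    intro j hj
    obtain ⟨x, hx, hx0⟩ := exists_deriv_eq_zero (f := fun x => (Prl k t).eval x)
      (hrlt j (j + 1) (Nat.lt_succ_self j) (by omega))
      (((Prl k t).continuous).continuousOn)
      (by show (Prl k t).eval _ = (Prl k t).eval _
          rw [hroot j (by omega), hroot (j + 1) (by omega)])
    exact ⟨x, hx, by rwa [Polynomial.deriv] at hx0⟩
  choose! sfun hs1 hs2 using hrolle
  have hslt : ∀ i j : ℕ, i < j → j < 2 * k - 1 → sfun i < sfun j := by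
    intro i j hij hj
    have h1 : sfun i < rfun k t (i + 1) := (hs1 i (by omega)).2
    have h2 : rfun k t j < sfun j := (hs1 j hj).1
    have h3 : rfun k t (i + 1) ≤ rfun k t j := by
      rcases eq_or_lt_of_le (show i + 1 ≤ j from hij) with he | hl
      · rw [he]
      · exact le_of_lt (hrlt _ _ hl (by omega))
    linarith
  have hSP' : ((Finset.range (2 * k - 1)).image sfun).card = 2 * k - 1 := by
    rw [Finset.card_image_of_injOn, Finset.card_range]
    intro i hi j hj hij
    simp only [Finset.coe_range, Set.mem_Iio] at hi hj
    rcases lt_trichotomy i j with h | h | h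
    · exact absurd hij (ne_of_lt (hslt i j h hj))
    · exact h
    · exact absurd hij.symm (ne_of_lt (hslt j i h hi))
  have hsimple' : ∀ c, (Prl k t).derivative.eval c = 0 →
      (Prl k t).derivative.derivative.eval c ≠ 0 := by
    refine simple_roots _ ?_ ((Finset.range (2 * k - 1)).image sfun) ?_ ?_
    · intro h
      have h0 := natDegree_eq_zero_of_derivative_eq_zero h
      rw [Prl_natDegree] at h0
      omega
    · intro c hc
      obtain ⟨i, hi, rfl⟩ := Finset.mem_image.1 hc
      exact hs2 i (Finset.mem_range.1 hi)
    · rw [hSP']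
      calc (Prl k t).derivative.natDegree ≤ (Prl k t).natDegree - 1 :=
            natDegree_derivative_le _
        _ = 2 * k - 1 := by rw [Prl_natDegree]
  have hmaxex : ∀ j, j < 2 * k - 1 → ∃ x, x ∈ Icc (rfun k t j) (rfun k t (j + 1)) ∧
      IsMaxOn (fun y => (Prl k t).eval y) (Icc (rfun k t j) (rfun k t (j + 1))) x := by
    intro j hj
    obtain ⟨x, hx, hmax⟩ := (isCompact_Icc).exists_isMaxOn
      (Set.nonempty_Icc.2 (le_of_lt (hrlt j (j + 1) (Nat.lt_succ_self j) (by omega))))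
      (((Prl k t).continuous).continuousOn)
    exact ⟨x, hx, hmax⟩
  choose! cfun hc1 hc2 using hmaxex
  have hnonpos : ∀ j, j < 2 * k - 1 → (Prl k t).eval (cfun j) ≤ 0 →
      ∀ x ∈ Icc (rfun k t j) (rfun k t (j + 1)), (Prl k t).eval x ≤ 0 :=
    fun j hj hle x hx => le_trans (isMaxOn_iff.1 (hc2 j hj) x hx) hle
  have hadj : ∀ j, j + 1 < 2 * k - 1 → (Prl k t).eval (cfun j) ≤ 0 →
      (Prl k t).eval (cfun (j + 1)) ≤ 0 → False := by
    intro j hj h1 h2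
    have hmem : Icc (rfun k t j) (rfun k t (j + 2)) ∈ 𝓝 (rfun k t (j + 1)) :=
      Icc_mem_nhds (hrlt j (j + 1) (Nat.lt_succ_self _) (by omega))
        (hrlt (j + 1) (j + 2) (Nat.lt_succ_self _) (by omega))
    have hmaxr : IsLocalMax (fun y => (Prl k t).eval y) (rfun k t (j + 1)) := by
      refine IsMaxOn.isLocalMax (isMaxOn_iff.2 ?_) hmem
      intro x hx
      rw [hroot (j + 1) (by omega)]
      rcases le_total x (rfun k t (j + 1)) with h | h
      · exact hnonpos j (by omega) h1 x ⟨hx.1, h⟩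
      · exact hnonpos (j + 1) (by omega) h2 x ⟨h, hx.2⟩
    have hd := hmaxr.deriv_eq_zero
    rw [Polynomial.deriv] at hd
    exact hsimple (rfun k t (j + 1)) (hroot (j + 1) (by omega)) hd
  have h0pos : 0 < (Prl k t).eval (cfun 0) := by
    by_contra h0
    push_neg at h0
    have hr01 : rfun k t 0 < rfun k t 1 := hrlt 0 1 Nat.zero_lt_one (by omega)
    have hmem : Icc (rfun k t 0 - 1) (rfun k t 1) ∈ 𝓝 (rfun k t 0) :=
      Icc_mem_nhds (by linarith) hr01
    have hmaxr : IsLocalMax (fun y => (Prl k t).eval y) (rfun k t 0) := by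
      refine IsMaxOn.isLocalMax (isMaxOn_iff.2 ?_) hmem
      intro x hx
      rw [hroot 0 (by omega)]
      rcases lt_or_ge x (rfun k t 0) with h | h
      · exact le_of_lt (rfun_neg_left k hk t ht htpos x h)
      · exact hnonpos 0 (by omega) h0 x ⟨h, hx.2⟩
    have hd := hmaxr.deriv_eq_zero
    rw [Polynomial.deriv] at hd
    exact hsimple (rfun k t 0) (hroot 0 (by omega)) hd
  have hNP : ((Finset.range (2 * k - 1)).filter
      (fun j => ¬ 0 < (Prl k t).eval (cfun j))).card ≤ k - 1 := by
    rw [← Finset.card_range (k - 1)]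
    apply Finset.card_le_card_of_injOn (fun j => (j - 1) / 2)
    · intro j hj
      simp only [Finset.mem_coe, Finset.mem_filter, Finset.mem_range] at hj
      have hj1 : j ≠ 0 := by rintro rfl; exact hj.2 h0pos
      simp only [Finset.mem_coe, Finset.mem_range]
      omega
    · intro i hi j hj hij
      simp only [Finset.mem_coe, Finset.mem_filter, Finset.mem_range] at hi hj
      have hi0 : i ≠ 0 := by rintro rfl; exact hi.2 h0pos
      have hj0 : j ≠ 0 := by rintro rfl; exact hj.2 h0pos
      have hij2 : (i - 1) / 2 = (j - 1) / 2 := hij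
      by_contra hne
      have hcase : i = j + 1 ∨ j = i + 1 := by omega
      rcases hcase with h | h
      · exact hadj j (by omega) (not_lt.1 hj.2) (not_lt.1 (h ▸ hi.2))
      · exact hadj i (by omega) (not_lt.1 hi.2) (not_lt.1 (h ▸ hj.2))
  have hPosCard : k ≤ ((Finset.range (2 * k - 1)).filter
      (fun j => 0 < (Prl k t).eval (cfun j))).card := by
    have htot := Finset.card_filter_add_card_filter_not
      (s := Finset.range (2 * k - 1)) (p := fun j => 0 < (Prl k t).eval (cfun j))
    rw [Finset.card_range] at htot
    omega
  have hint : ∀ j, j < 2 * k - 1 → 0 < (Prl k t).eval (cfun j) →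
      cfun j ∈ Ioo (rfun k t j) (rfun k t (j + 1)) := by
    intro j hjlt hjpos
    have hmem := hc1 j hjlt
    constructor
    · rcases eq_or_lt_of_le hmem.1 with he | hl
      · exfalso; rw [← he, hroot j (by omega)] at hjpos; exact lt_irrefl _ hjpos
      · exact hl
    · rcases eq_or_lt_of_le hmem.2 with he | hl
      · exfalso; rw [he, hroot (j + 1) (by omega)] at hjpos; exact lt_irrefl _ hjpos
      · exact hl
  refine ⟨((Finset.range (2 * k - 1)).filter
      (fun j => 0 < (Prl k t).eval (cfun j))).image cfun, ?_, ?_⟩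
  · rw [Finset.card_image_of_injOn]
    · exact hPosCard
    · intro i hi j hj hij
      simp only [Finset.mem_coe, Finset.mem_filter, Finset.mem_range] at hi hj
      rcases lt_trichotomy i j with h | h | h
      · exfalso
        have h1 := (hint i hi.1 hi.2).2
        have h2 := (hint j hj.1 hj.2).1
        have h3 : rfun k t (i + 1) ≤ rfun k t j := by
          rcases eq_or_lt_of_le (show i + 1 ≤ j from h) with he | hl
          · rw [he]
          · exact le_of_lt (hrlt _ _ hl (by omega))
        rw [hij] at h1
        linarith
      · exact h
      · exfalso
        have h1 := (hint j hj.1 hj.2).2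
        have h2 := (hint i hi.1 hi.2).1
        have h3 : rfun k t (j + 1) ≤ rfun k t i := by
          rcases eq_or_lt_of_le (show j + 1 ≤ i from h) with he | hl
          · rw [he]
          · exact le_of_lt (hrlt _ _ hl (by omega))
        rw [hij] at h2
        linarith
  · intro c hc
    obtain ⟨j, hj, rfl⟩ := Finset.mem_image.1 hc
    simp only [Finset.mem_filter, Finset.mem_range] at hj
    have hjlt := hj.1
    have hio := hint j hj.1 hj.2
    have hmem : Icc (rfun k t j) (rfun k t (j + 1)) ∈ 𝓝 (cfun j) :=
      Icc_mem_nhds hio.1 hio.2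
    have hlocmax : IsLocalMax (fun x => (Prl k t).eval x) (cfun j) :=
      IsMaxOn.isLocalMax (hc2 j hjlt) hmem
    have hd : (Prl k t).derivative.eval (cfun j) = 0 := by
      have h1 := hlocmax.deriv_eq_zero
      rwa [Polynomial.deriv] at h1
    exact ⟨hlocmax, hd, second_test _ _ hlocmax (hsimple' _ hd)⟩

/-- evaluation of a mapped polynomial at a real point. -/
lemma map_eval_real (g : Polynomial ℝ) (x : ℝ) :
    (g.map (algebraMap ℝ ℂ)).eval (x : ℂ) = ((g.eval x : ℝ) : ℂ) := by
  have h1 : ((x : ℝ) : ℂ) = algebraMap ℝ ℂ x := rfl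
  rw [Polynomial.eval_map, h1, Polynomial.eval₂_at_apply]
  rfl

lemma Prl_map_eval (k : ℕ) (t : Fin k → ℝ) (z : ℂ) :
    ((Prl k t).map (algebraMap ℝ ℂ)).eval z
      = -∏ l : Fin k, ((z - (t l : ℂ)) * (z + (t l : ℂ))) := by
  simp [Prl, Polynomial.map_neg, Polynomial.map_prod, Polynomial.map_mul, Polynomial.map_sub,
    Polynomial.map_add, Polynomial.map_X, Polynomial.map_C, eval_prod, Complex.coe_algebraMap]

/-- The continuous linear map `(x, y) ↦ x + y_j i`. -/
def Amap (N : ℕ) (j : Fin N) : Pt N →L[ℝ] ℂ :=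
  Complex.ofRealCLM.comp (ContinuousLinearMap.fst ℝ ℝ (Fin N → ℝ)) +
    Complex.I • (Complex.ofRealCLM.comp
      ((ContinuousLinearMap.proj j).comp (ContinuousLinearMap.snd ℝ ℝ (Fin N → ℝ))))

lemma Amap_apply (N : ℕ) (j : Fin N) (q : Pt N) :
    Amap N j q = (q.1 : ℂ) + (q.2 j : ℂ) * Complex.I := by
  simp [Amap, mul_comm]

/-- The continuous linear map `(x, y) ↦ y_j`. -/
def pimap (N : ℕ) (j : Fin N) : Pt N →L[ℝ] ℝ :=
  (ContinuousLinearMap.proj j).comp (ContinuousLinearMap.snd ℝ ℝ (Fin N → ℝ))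

@[simp] lemma pimap_apply (N : ℕ) (j : Fin N) (q : Pt N) : pimap N j q = q.2 j := rfl

/-- chain rule for `q ↦ Re (P(A q) * c)`. -/
lemma chainlem {E : Type*} [NormedAddCommGroup E] [NormedSpace ℝ E]
    (P : Polynomial ℂ) (c : ℂ) (A : E →L[ℝ] ℂ) (p : E) :
    HasFDerivAt (fun q : E => (P.eval (A q) * c).re)
      (Complex.reCLM.comp ((P.derivative.eval (A p) * c) • A)) p := by
  have h1 : HasDerivAt (fun z : ℂ => P.eval z * c) (P.derivative.eval (A p) * c) (A p) :=
    (P.hasDerivAt (A p)).mul_const c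
  have h2 := (h1.hasFDerivAt.restrictScalars ℝ).comp p (A.hasFDerivAt (x := p))
  have h5 := (Complex.reCLM.hasFDerivAt (x := P.eval (A p) * c)).comp p h2
  have h6 : (⇑Complex.reCLM ∘ ((fun z : ℂ => P.eval z * c) ∘ ⇑A))
      = fun q : E => (P.eval (A q) * c).re := rfl
  rw [h6] at h5
  have h7 : Complex.reCLM.comp ((P.derivative.eval (A p) * c) • A)
      = Complex.reCLM.comp
        (((ContinuousLinearMap.smulRight (1 : ℂ →L[ℂ] ℂ)
          (P.derivative.eval (A p) * c)).restrictScalars ℝ).comp A) := by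
    refine ContinuousLinearMap.ext fun w => ?_
    simp [mul_comm]
  rw [h7]
  exact h5

theorem statement15 (N : ℕ) (hN : 2 ≤ N) (k : ℕ) (hk : 1 ≤ k)
    (t : Fin k → ℝ) (ht : StrictMono t) (htpos : ∀ i, 0 < t i) :
    ∃ ε₀ > (0:ℝ), ∀ ε ∈ Ioo (0:ℝ) ε₀,
      ∃ S : Finset (Pt N), k ≤ S.card ∧
        ∀ p ∈ S,
          -- the points are of the form (±t̄, 0,…,0) with t̄ a local maximum point of q = v(·,0)
          (∃ tb : ℝ, IsLocalMax (fun s => vfun k t s 0) tb ∧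
            (p = ((tb, 0) : Pt N) ∨ p = ((-tb, 0) : Pt N))) ∧
          -- each is a nondegenerate local maximum of u_ε
          fderiv ℝ (ueps N k t ε) p = 0 ∧
          (∀ w : Pt N, w ≠ 0 → D2 (ueps N k t ε) w p < 0) := by
  classical
  obtain ⟨C, hCcard, hC⟩ := oneD k hk t ht htpos
  have hCne : C.Nonempty := Finset.card_pos.1 (by omega)
  refine ⟨C.inf' hCne (fun c => 1 / (-((Prl k t).derivative.derivative.eval c))), ?_, ?_⟩
  · show (0:ℝ) < _
    rw [Finset.lt_inf'_iff]
    intro c hc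
    have h1 := (hC c hc).2.2
    have h2 : 0 < -((Prl k t).derivative.derivative.eval c) := by linarith
    exact one_div_pos.2 h2
  · intro ε hε
    obtain ⟨hε0, hεlt⟩ := hε
    refine ⟨C.image (fun c => ((c, 0) : Pt N)), ?_, ?_⟩
    · rw [Finset.card_image_of_injective _
        (fun a b h => (congrArg Prod.fst h : a = b))]
      exact hCcard
    intro p hp
    obtain ⟨c, hcC, rfl⟩ := Finset.mem_image.1 hp
    obtain ⟨hcmax, hd1, hd2⟩ := hC c hcC
    -- ε bound : 1 + ε q'' > 0
    have hεq : 0 < 1 + ε * (Prl k t).derivative.derivative.eval c := by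
      have hle := Finset.inf'_le
        (fun c => 1 / (-((Prl k t).derivative.derivative.eval c))) hcC
      have h1 : ε < 1 / (-((Prl k t).derivative.derivative.eval c)) :=
        lt_of_lt_of_le hεlt hle
      rw [lt_div_iff₀ (by linarith)] at h1
      nlinarith
    -- complex polynomial setup
    have hmapev := map_eval_real
    have hvP : ∀ (a s : ℝ), vfun k t a s
        = (((Prl k t).map (algebraMap ℝ ℂ)).eval ((a : ℂ) + (s : ℂ) * Complex.I)).re := by
      intro a s
      rw [vfun, Prl_map_eval]
    have hA0 : ∀ j : Fin N, Amap N j ((c, 0) : Pt N) = (c : ℂ) := by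
      intro j
      rw [Amap_apply]
      simp
    -- function rewriting
    have hueq : ueps N k t ε = fun q : Pt N =>
        1 / 2 * ((N : ℝ) - ∑ j, q.2 j * q.2 j) +
          ε * ∑ j, (((Prl k t).map (algebraMap ℝ ℂ)).eval (Amap N j q) * 1).re := by
      funext q
      rw [ueps]
      congr 1
      · congr 2
        exact Finset.sum_congr rfl (fun j _ => pow_two (q.2 j))
      · congr 1
        refine Finset.sum_congr rfl (fun j _ => ?_)
        rw [hvP, mul_one, Amap_apply]
    -- global derivative
    have hUf : ∀ q : Pt N, HasFDerivAt (ueps N k t ε)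
        ((1 / 2 : ℝ) • ((0 : Pt N →L[ℝ] ℝ) - ∑ j, (q.2 j • pimap N j + q.2 j • pimap N j)) +
          ε • ∑ j, Complex.reCLM.comp
            ((((Prl k t).map (algebraMap ℝ ℂ)).derivative.eval (Amap N j q) * 1) •
              Amap N j)) q := by
      intro q
      rw [hueq]
      have h1 : ∀ j : Fin N, HasFDerivAt (fun q : Pt N => q.2 j * q.2 j)
          (q.2 j • pimap N j + q.2 j • pimap N j) q :=
        fun j => ((pimap N j).hasFDerivAt (x := q)).mul ((pimap N j).hasFDerivAt (x := q))
      have h2 : ∀ j : Fin N, HasFDerivAt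
          (fun q : Pt N => (((Prl k t).map (algebraMap ℝ ℂ)).eval (Amap N j q) * 1).re)
          (Complex.reCLM.comp
            ((((Prl k t).map (algebraMap ℝ ℂ)).derivative.eval (Amap N j q) * 1) •
              Amap N j)) q :=
        fun j => chainlem _ 1 (Amap N j) q
      exact (((hasFDerivAt_const (N : ℝ) q).sub
        (HasFDerivAt.fun_sum (fun j _ => h1 j))).const_mul (1 / 2)).add
        ((HasFDerivAt.fun_sum (fun j _ => h2 j)).const_mul ε)
    have hUval : ∀ (q w : Pt N), fderiv ℝ (ueps N k t ε) q w
        = ε * ∑ j, (((Prl k t).map (algebraMap ℝ ℂ)).derivative.eval (Amap N j q)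
            * Amap N j w).re - ∑ j, q.2 j * w.2 j := by
      intro q w
      rw [(hUf q).fderiv]
      simp only [ContinuousLinearMap.add_apply, ContinuousLinearMap.smul_apply,
        ContinuousLinearMap.sub_apply, ContinuousLinearMap.zero_apply,
        ContinuousLinearMap.coe_sum', Finset.sum_apply, ContinuousLinearMap.coe_comp',
        Function.comp_apply, Complex.reCLM_apply, smul_eq_mul, mul_one, pimap_apply]
      have hsum2 : ∑ j : Fin N, (q.2 j * w.2 j + q.2 j * w.2 j)
          = 2 * ∑ j : Fin N, q.2 j * w.2 j := by
        rw [Finset.sum_add_distrib]; ring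
      rw [hsum2]
      ring
    -- gradient vanishes
    have hfd0 : fderiv ℝ (ueps N k t ε) ((c, 0) : Pt N) = 0 := by
      refine ContinuousLinearMap.ext fun w => ?_
      rw [ContinuousLinearMap.zero_apply, hUval]
      simp [hA0, Polynomial.derivative_map, hmapev, hd1]
    refine ⟨⟨c, ?_, Or.inl rfl⟩, hfd0, ?_⟩
    · have hfun : (fun s : ℝ => vfun k t s 0) = fun x : ℝ => (Prl k t).eval x := by
        funext a
        rw [hvP]
        simp [hmapev]
      rw [hfun]
      exact hcmax
    · intro w hw
      have hgfun : (fun q : Pt N => fderiv ℝ (ueps N k t ε) q w) =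
          fun q : Pt N => ε * ∑ j, (((Prl k t).map (algebraMap ℝ ℂ)).derivative.eval
            (Amap N j q) * Amap N j w).re - ∑ j, q.2 j * w.2 j :=
        funext fun q => hUval q w
      rw [D2, hgfun]
      have hgd : HasFDerivAt (fun q : Pt N =>
          ε * ∑ j, (((Prl k t).map (algebraMap ℝ ℂ)).derivative.eval (Amap N j q)
            * Amap N j w).re - ∑ j, q.2 j * w.2 j)
          (ε • ∑ j, Complex.reCLM.comp
            ((((Prl k t).map (algebraMap ℝ ℂ)).derivative.derivative.eval
              (Amap N j ((c, 0) : Pt N)) * Amap N j w) • Amap N j)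
            - ∑ j, (w.2 j) • pimap N j) ((c, 0) : Pt N) := by
        apply HasFDerivAt.sub
        · exact (HasFDerivAt.fun_sum
            (fun j _ => chainlem _ (Amap N j w) (Amap N j) _)).const_mul ε
        · exact HasFDerivAt.fun_sum
            (fun j _ => ((pimap N j).hasFDerivAt).mul_const (w.2 j))
      rw [hgd.fderiv]
      have hPc2 : (((Prl k t).map (algebraMap ℝ ℂ)).derivative.derivative).eval ((c : ℂ))
          = (((Prl k t).derivative.derivative.eval c : ℝ) : ℂ) := by
        rw [Polynomial.derivative_map, Polynomial.derivative_map, hmapev]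
      have hre : ∀ (a b s : ℝ), (((a : ℝ) : ℂ) * ((b : ℂ) + (s : ℂ) * Complex.I)
          * ((b : ℂ) + (s : ℂ) * Complex.I)).re = a * (b * b) - a * (s * s) := by
        intro a b s
        simp [Complex.mul_re, Complex.mul_im, Complex.add_re, Complex.add_im,
          Complex.ofReal_re, Complex.ofReal_im, Complex.I_re, Complex.I_im]
        ring
      simp only [ContinuousLinearMap.sub_apply, ContinuousLinearMap.smul_apply,
        ContinuousLinearMap.coe_sum', Finset.sum_apply, ContinuousLinearMap.coe_comp',
        Function.comp_apply, Complex.reCLM_apply, smul_eq_mul, pimap_apply,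
        hA0, hPc2, Amap_apply, hre]
      have hsum : ∑ j : Fin N, ((Prl k t).derivative.derivative.eval c * (w.1 * w.1)
          - (Prl k t).derivative.derivative.eval c * (w.2 j * w.2 j))
          = (N : ℝ) * ((Prl k t).derivative.derivative.eval c * (w.1 * w.1))
            - (Prl k t).derivative.derivative.eval c * ∑ j, w.2 j * w.2 j := by
        rw [Finset.sum_sub_distrib, Finset.sum_const, Finset.card_univ, Fintype.card_fin,
          ← Finset.mul_sum, nsmul_eq_mul]
      rw [hsum]
      have hSy0 : 0 ≤ ∑ j : Fin N, w.2 j * w.2 j :=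
        Finset.sum_nonneg fun j _ => mul_self_nonneg _
      by_cases hw1 : w.1 = 0
      · have hj : ∃ j, w.2 j ≠ 0 := by
          by_contra hno
          push_neg at hno
          apply hw
          rw [Prod.ext_iff]
          exact ⟨hw1, funext hno⟩
        obtain ⟨j, hj⟩ := hj
        have hSypos : 0 < ∑ j : Fin N, w.2 j * w.2 j :=
          Finset.sum_pos' (fun i _ => mul_self_nonneg _)
            ⟨j, Finset.mem_univ j, mul_self_pos.2 hj⟩
        rw [hw1]
        nlinarith [mul_pos hεq hSypos]
      · have hw1sq : 0 < w.1 * w.1 := mul_self_pos.2 hw1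
        have hN0 : (2 : ℝ) ≤ (N : ℝ) := by exact_mod_cast hN
        nlinarith [mul_nonneg (le_of_lt hεq) hSy0, mul_pos hε0 hw1sq,
          mul_pos (mul_pos hε0 hw1sq) (neg_pos.2 hd2)]
end
end
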